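/- arXiv:1004.2422 — 8 statements merged into one kernel-verified Lean document; each statement's English description precedes it below -/
import Mathlib

section
/- Let A be a finite set and let X ⊆ A^ℤ be a subshift. Then the following are equivalent: (a) X is strongly irreducible; (b) there is an integer N₀ ≥ 0 such that for all words u, v ∈ L(X) and every integer N ≥ N₀, there exists a word w ∈ A* of length N satisfying uwv ∈ L(X). -/
open Pointwise Filter

/-- The shift action of `ℤ` on bi-infinite sequences: `(n • x)(m) = x(m - n)`. -/
def shiftZ {A : Type*} (n : ℤ) (x : ℤ → A) : ℤ → A := fun m => x (m - n)

/-- A subshift of `A^ℤ`: closed and shift-invariant (prodiscrete topology). -/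
def IsSubshiftZ {A : Type*} [TopologicalSpace A] (X : Set (ℤ → A)) : Prop :=
  IsClosed X ∧ ∀ n : ℤ, ∀ x ∈ X, shiftZ n x ∈ X

/-- The `Δ`-neighborhood `Ω^{+Δ} = {n : (n + Δ) ∩ Ω ≠ ∅}` (additive notation). -/
def plusNbhdZ (Ω Δ : Set ℤ) : Set ℤ := {n : ℤ | ∃ d ∈ Δ, n + d ∈ Ω}

/-- `Δ`-irreducibility of a subshift of `A^ℤ`. -/
def DeltaIrreducibleZ {A : Type*} (Δ : Finset ℤ) (X : Set (ℤ → A)) : Prop :=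
  ∀ Ω₁ Ω₂ : Finset ℤ,
    plusNbhdZ (Ω₁ : Set ℤ) (Δ : Set ℤ) ∩ (Ω₂ : Set ℤ) = ∅ →
    ∀ x₁ ∈ X, ∀ x₂ ∈ X,
      ∃ x ∈ X, (∀ n ∈ Ω₁, x n = x₁ n) ∧ (∀ n ∈ Ω₂, x n = x₂ n)

/-- Strong irreducibility for subshifts of `A^ℤ`. -/
def StronglyIrreducibleZ {A : Type*} (X : Set (ℤ → A)) : Prop :=
  ∃ Δ : Finset ℤ, DeltaIrreducibleZ Δ X

/-- The language of a subshift `X ⊆ A^ℤ`: all words `x(1) x(2) ⋯ x(n)` with `x ∈ X`. -/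
def language {A : Type*} (X : Set (ℤ → A)) : Set (List A) :=
  {w : List A | ∃ x ∈ X, w = (List.range w.length).map (fun i => x ((i : ℤ) + 1))}

lemma language_eq {A : Type*} (X : Set (ℤ → A)) :
    language X
      = {w : List A | ∃ x ∈ X, w = (List.range w.length).map (fun i : ℕ => x ((i : ℤ) + 1))} := by
  unfold language
  ext w
  simp only [Set.mem_setOf_eq, bind_pure_comp, List.map_eq_map, List.map_map]
  rfl

lemma mem_language_of_window {A : Type*} {X : Set (ℤ → A)}
    (hsh : ∀ n : ℤ, ∀ x ∈ X, shiftZ n x ∈ X) {x : ℤ → A} (hx : x ∈ X) (p : ℤ) (L : ℕ) :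
    ((List.range L).map (fun i : ℕ => x (p + i))) ∈ language X := by
  rw [language_eq]
  refine ⟨shiftZ (1 - p) x, hsh _ _ hx, ?_⟩
  simp only [List.length_map, List.length_range]
  apply List.map_congr_left
  intro i _
  simp only [shiftZ]
  congr 1
  ring

lemma getElem_of_word {A : Type*} {w : List A} {z : ℤ → A}
    (he : w = (List.range w.length).map (fun i : ℕ => z ((i : ℤ) + 1)))
    (i : ℕ) (hi : i < w.length) : w[i] = z ((i : ℤ) + 1) := by
  have h2 : w[i]? = ((List.range w.length).map (fun i : ℕ => z ((i : ℤ) + 1)))[i]? := by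
    rw [← he]
  rw [List.getElem?_eq_getElem hi, List.getElem?_map, List.getElem?_range hi] at h2
  simpa using h2

lemma getElem_of_language {A : Type*} {X : Set (ℤ → A)} {w : List A} (h : w ∈ language X) :
    ∃ z ∈ X, ∀ (i : ℕ) (hi : i < w.length), w[i] = z ((i : ℤ) + 1) := by
  rw [language_eq] at h
  obtain ⟨z, hz, he⟩ := h
  exact ⟨z, hz, getElem_of_word he⟩

/-- Gluing along two intervals using the language property. -/
lemma glue_intervals {A : Type*} {X : Set (ℤ → A)}
    (hsh : ∀ n : ℤ, ∀ x ∈ X, shiftZ n x ∈ X) {N₀ : ℕ}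
    (hL : ∀ u ∈ language X, ∀ v ∈ language X, ∀ N : ℕ, N₀ ≤ N →
      ∃ w : List A, w.length = N ∧ (u ++ w ++ v) ∈ language X)
    {x₁ x₂ : ℤ → A} (hx₁ : x₁ ∈ X) (hx₂ : x₂ ∈ X) (p a b q : ℤ)
    (hpa : p ≤ a) (hbq : b ≤ q) (hgap : (N₀ : ℤ) ≤ b - a - 1) :
    ∃ y ∈ X, (∀ n, p ≤ n → n ≤ a → y n = x₁ n) ∧ (∀ n, b ≤ n → n ≤ q → y n = x₂ n) := by
  set u := (List.range (a - p + 1).toNat).map (fun i : ℕ => x₁ (p + i)) with hu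
  set v := (List.range (q - b + 1).toNat).map (fun i : ℕ => x₂ (b + i)) with hv
  have hul : u.length = (a - p + 1).toNat := by simp [hu]
  have hvl : v.length = (q - b + 1).toNat := by simp [hv]
  obtain ⟨w, hwl, hwmem⟩ := hL u (mem_language_of_window hsh hx₁ p _)
    v (mem_language_of_window hsh hx₂ b _) (b - a - 1).toNat (by omega)
  obtain ⟨z, hz, hze⟩ := getElem_of_language hwmem
  have htot : (u ++ w ++ v).length = (a - p + 1).toNat + (b - a - 1).toNat + (q - b + 1).toNat := by
    simp [hul, hvl, hwl]
    omega
  refine ⟨shiftZ (p - 1) z, hsh _ _ hz, ?_, ?_⟩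
  · intro n h1 h2
    have hnn : (0 : ℤ) ≤ n - p := by omega
    set i := (n - p).toNat with hi
    have hic : (i : ℤ) = n - p := Int.toNat_of_nonneg hnn
    have hiu : i < u.length := by rw [hul]; omega
    have hiuw : i < (u ++ w).length := by simp [hul, hwl]; omega
    have hilt : i < (u ++ w ++ v).length := by rw [htot]; omega
    have e1 : (u ++ w ++ v)[i] = u[i] := by
      rw [List.getElem_append_left hiuw, List.getElem_append_left hiu]
    have e2 : u[i] = x₁ (p + i) := by simp [hu]
    have e3 := hze i hilt
    rw [e1, e2] at e3
    have e4 : shiftZ (p - 1) z n = z ((i : ℤ) + 1) := by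
      simp only [shiftZ]
      congr 1
      omega
    rw [e4, ← e3]
    congr 1
    omega
  · intro n h1 h2
    have hnn : (0 : ℤ) ≤ n - p := by omega
    set i := (n - p).toNat with hi
    have hic : (i : ℤ) = n - p := Int.toNat_of_nonneg hnn
    have hilt : i < (u ++ w ++ v).length := by rw [htot]; omega
    have hge : (u ++ w).length ≤ i := by simp [hul, hwl]; omega
    have hvidx : i - (u ++ w).length < v.length := by simp [hul, hwl, hvl]; omega
    have e1 : (u ++ w ++ v)[i] = v[i - (u ++ w).length]'hvidx := List.getElem_append_right hge
    have hidx : i - (u ++ w).length = (n - b).toNat := by simp [hul, hwl]; omega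
    have hvlt : (n - b).toNat < v.length := by rw [hvl]; omega
    have e2 : v[(n - b).toNat]'hvlt = x₂ (b + (n - b).toNat) := by simp [hv]
    have e3 := hze i hilt
    have e4 : shiftZ (p - 1) z n = z ((i : ℤ) + 1) := by
      simp only [shiftZ]
      congr 1
      omega
    rw [e4, ← e3, e1]
    have : v[i - (u ++ w).length]'(by omega) = v[(n - b).toNat]'hvlt := by
      congr 1
    rw [this, e2]
    congr 1
    omega

/-- Gluing on arbitrary separated finite sets, by induction on total cardinality. -/
lemma glue_sets {A : Type*} {X : Set (ℤ → A)}
    (hsh : ∀ n : ℤ, ∀ x ∈ X, shiftZ n x ∈ X) {N₀ : ℕ}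
    (hL : ∀ u ∈ language X, ∀ v ∈ language X, ∀ N : ℕ, N₀ ≤ N →
      ∃ w : List A, w.length = N ∧ (u ++ w ++ v) ∈ language X) :
    ∀ k : ℕ, ∀ Ω₁ Ω₂ : Finset ℤ, Ω₁.card + Ω₂.card ≤ k →
    (∀ m ∈ Ω₁, ∀ n ∈ Ω₂, (N₀ : ℤ) < |m - n|) →
    ∀ x₁ ∈ X, ∀ x₂ ∈ X,
      ∃ x ∈ X, (∀ n ∈ Ω₁, x n = x₁ n) ∧ (∀ n ∈ Ω₂, x n = x₂ n) := by
  intro k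
  induction k with
  | zero =>
    intro Ω₁ Ω₂ hcard _ x₁ hx₁ x₂ hx₂
    have h1 : Ω₁ = ∅ := Finset.card_eq_zero.mp (by omega)
    have h2 : Ω₂ = ∅ := Finset.card_eq_zero.mp (by omega)
    subst h1; subst h2
    exact ⟨x₁, hx₁, by simp, by simp⟩
  | succ k ih =>
    intro Ω₁ Ω₂ hcard hsep x₁ hx₁ x₂ hx₂
    rcases Finset.eq_empty_or_nonempty Ω₁ with h1 | h1
    · subst h1; exact ⟨x₂, hx₂, by simp, fun n _ => rfl⟩
    rcases Finset.eq_empty_or_nonempty Ω₂ with h2 | h2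
    · subst h2; exact ⟨x₁, hx₁, fun n _ => rfl, by simp⟩
    set M₁ := Ω₁.max' h1 with hM₁
    set M₂ := Ω₂.max' h2 with hM₂
    have hMne : M₁ ≠ M₂ := by
      intro h
      have := hsep M₁ (Ω₁.max'_mem h1) M₂ (Ω₂.max'_mem h2)
      rw [h] at this
      simp at this
      omega
    rcases lt_or_gt_of_ne hMne with hlt | hlt
    · -- M₁ < M₂ : split Ω₂ around a := M₁
      set a := M₁ with ha
      set Ω₂' := Ω₂.filter (· ≤ a) with hΩ₂'
      set T := Ω₂.filter (a < ·) with hT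
      have hTne : T.Nonempty := ⟨M₂, Finset.mem_filter.mpr ⟨Ω₂.max'_mem h2, hlt⟩⟩
      have hcard' : Ω₁.card + Ω₂'.card ≤ k := by
        have hsub : Ω₂' ⊆ Ω₂ := Finset.filter_subset _ _
        have hlt2 : Ω₂'.card < Ω₂.card := by
          apply Finset.card_lt_card
          refine ⟨hsub, fun hss => ?_⟩
          have hmm := (Finset.mem_filter.mp (hss (Ω₂.max'_mem h2))).2
          omega
        omega
      obtain ⟨y, hy, hy1, hy2⟩ := ih Ω₁ Ω₂' hcard'
        (fun m hm n hn => hsep m hm n (Finset.filter_subset _ _ hn)) x₁ hx₁ x₂ hx₂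
      set b := T.min' hTne with hb
      have hbΩ₂ : b ∈ Ω₂ := Finset.filter_subset _ _ (T.min'_mem hTne)
      have hba : a < b := (Finset.mem_filter.mp (T.min'_mem hTne)).2
      have hgap : (N₀ : ℤ) ≤ b - a - 1 := by
        have := hsep a (Ω₁.max'_mem h1) b hbΩ₂
        rw [abs_sub_comm] at this
        rw [abs_of_nonneg (by omega)] at this
        omega
      set p := min (Ω₁.min' h1) (Ω₂.min' h2) with hp
      have hpa : p ≤ a := le_trans (min_le_left _ _) (Ω₁.min'_le _ (Ω₁.max'_mem h1))
      have hbq : b ≤ M₂ := T.min'_le _ (Finset.mem_filter.mpr ⟨Ω₂.max'_mem h2, hlt⟩)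
      obtain ⟨x, hx, hxy, hxx₂⟩ := glue_intervals hsh hL hy hx₂ p a b M₂ hpa hbq hgap
      refine ⟨x, hx, ?_, ?_⟩
      · intro n hn
        have hple : p ≤ n := le_trans (min_le_left _ _) (Ω₁.min'_le _ hn)
        have hna : n ≤ a := Ω₁.le_max' _ hn
        rw [hxy n hple hna]
        exact hy1 n hn
      · intro n hn
        rcases le_or_gt n a with hna | hna
        · have hple : p ≤ n := le_trans (min_le_right _ _) (Ω₂.min'_le _ hn)
          rw [hxy n hple hna]
          exact hy2 n (Finset.mem_filter.mpr ⟨hn, hna⟩)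
        · have hnT : n ∈ T := Finset.mem_filter.mpr ⟨hn, hna⟩
          exact hxx₂ n (T.min'_le _ hnT) (Ω₂.le_max' _ hn)
    · -- M₂ < M₁ : split Ω₁ around a := M₂
      set a := M₂ with ha
      set Ω₁' := Ω₁.filter (· ≤ a) with hΩ₁'
      set T := Ω₁.filter (a < ·) with hT
      have hTne : T.Nonempty := ⟨M₁, Finset.mem_filter.mpr ⟨Ω₁.max'_mem h1, hlt⟩⟩
      have hcard' : Ω₁'.card + Ω₂.card ≤ k := by
        have hsub : Ω₁' ⊆ Ω₁ := Finset.filter_subset _ _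
        have hlt2 : Ω₁'.card < Ω₁.card := by
          apply Finset.card_lt_card
          refine ⟨hsub, fun hss => ?_⟩
          have hmm := (Finset.mem_filter.mp (hss (Ω₁.max'_mem h1))).2
          omega
        omega
      obtain ⟨y, hy, hy1, hy2⟩ := ih Ω₁' Ω₂ hcard'
        (fun m hm n hn => hsep m (Finset.filter_subset _ _ hm) n hn) x₁ hx₁ x₂ hx₂
      set b := T.min' hTne with hb
      have hbΩ₁ : b ∈ Ω₁ := Finset.filter_subset _ _ (T.min'_mem hTne)
      have hba : a < b := (Finset.mem_filter.mp (T.min'_mem hTne)).2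
      have hgap : (N₀ : ℤ) ≤ b - a - 1 := by
        have := hsep b hbΩ₁ a (Ω₂.max'_mem h2)
        rw [abs_of_nonneg (by omega)] at this
        omega
      set p := min (Ω₁.min' h1) (Ω₂.min' h2) with hp
      have hpa : p ≤ a := le_trans (min_le_right _ _) (Ω₂.min'_le _ (Ω₂.max'_mem h2))
      have hbq : b ≤ M₁ := T.min'_le _ (Finset.mem_filter.mpr ⟨Ω₁.max'_mem h1, hlt⟩)
      obtain ⟨x, hx, hxy, hxx₁⟩ := glue_intervals hsh hL hy hx₁ p a b M₁ hpa hbq hgap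
      refine ⟨x, hx, ?_, ?_⟩
      · intro n hn
        rcases le_or_gt n a with hna | hna
        · have hple : p ≤ n := le_trans (min_le_left _ _) (Ω₁.min'_le _ hn)
          rw [hxy n hple hna]
          exact hy1 n (Finset.mem_filter.mpr ⟨hn, hna⟩)
        · have hnT : n ∈ T := Finset.mem_filter.mpr ⟨hn, hna⟩
          exact hxx₁ n (T.min'_le _ hnT) (Ω₁.le_max' _ hn)
      · intro n hn
        have hple : p ≤ n := le_trans (min_le_right _ _) (Ω₂.min'_le _ hn)
        have hna : n ≤ a := Ω₂.le_max' _ hn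
        rw [hxy n hple hna]
        exact hy2 n hn

/-- Characterization of strongly irreducible subshifts over `ℤ` via their language. -/
theorem stronglyIrreducibleZ_iff_language {A : Type*} [Fintype A]
    [TopologicalSpace A] [DiscreteTopology A]
    (X : Set (ℤ → A)) (hX : IsSubshiftZ X) :
    StronglyIrreducibleZ X ↔
      ∃ N₀ : ℕ, ∀ u ∈ language X, ∀ v ∈ language X, ∀ N : ℕ, N₀ ≤ N →
        ∃ w : List A, w.length = N ∧ (u ++ w ++ v) ∈ language X := by
  obtain ⟨-, hsh⟩ := hX
  constructor
  · rintro ⟨Δ, hΔ⟩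
    set M : ℕ := Δ.sup (fun d => d.natAbs) with hM
    refine ⟨M, ?_⟩
    intro u hu v hv N hN
    rw [language_eq] at hu hv
    obtain ⟨xu, hxu, hue⟩ := hu
    obtain ⟨xv, hxv, hve⟩ := hv
    set L₁ := u.length with hL₁
    set L₂ := v.length with hL₂
    set x₂ := shiftZ ((L₁ : ℤ) + N) xv with hx₂def
    have hx₂ : x₂ ∈ X := hsh _ _ hxv
    set Ω₁ : Finset ℤ := Finset.Icc 1 (L₁ : ℤ) with hΩ₁
    set Ω₂ : Finset ℤ := Finset.Icc ((L₁ : ℤ) + N + 1) ((L₁ : ℤ) + N + L₂) with hΩ₂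
    have hdisj : plusNbhdZ (Ω₁ : Set ℤ) (Δ : Set ℤ) ∩ (Ω₂ : Set ℤ) = ∅ := by
      ext n
      simp only [Set.mem_inter_iff, Set.mem_empty_iff_false, iff_false]
      rintro ⟨⟨d, hd, hnd⟩, hn2⟩
      have hdabs : d.natAbs ≤ M := Finset.le_sup hd
      simp only [hΩ₁, hΩ₂, Finset.coe_Icc, Set.mem_Icc] at hnd hn2
      omega
    obtain ⟨x, hx, hx1, hx2⟩ := hΔ Ω₁ Ω₂ hdisj xu hxu x₂ hx₂
    set wm := (List.range N).map (fun i : ℕ => x ((L₁ : ℤ) + i + 1)) with hwm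
    have hwml : wm.length = N := by simp [hwm]
    refine ⟨wm, hwml, ?_⟩
    rw [language_eq]
    refine ⟨x, hx, ?_⟩
    have hlen : (u ++ wm ++ v).length = L₁ + N + L₂ := by simp [hwml]; omega
    apply List.ext_getElem
    · simp
    · intro i hi1 hi2
      have hiT : i < L₁ + N + L₂ := by rw [← hlen]; exact hi1
      have hrhs : ((List.range (u ++ wm ++ v).length).map
          (fun j : ℕ => x ((j : ℤ) + 1)))[i] = x ((i : ℤ) + 1) := by
        simp
      rw [hrhs]
      rcases lt_or_ge i L₁ with hc | hc
      · have h1 : i < (u ++ wm).length := by simp [hwml]; omega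
        rw [List.getElem_append_left h1, List.getElem_append_left (by omega : i < u.length)]
        rw [getElem_of_word hue i (by omega)]
        exact (hx1 ((i : ℤ) + 1) (by simp only [hΩ₁, Finset.mem_Icc]; omega)).symm
      rcases lt_or_ge i (L₁ + N) with hc2 | hc2
      · have h1 : i < (u ++ wm).length := by simp [hwml]; omega
        rw [List.getElem_append_left h1, List.getElem_append_right (by omega : u.length ≤ i)]
        simp only [hwm, List.getElem_map, List.getElem_range]
        congr 1
        omega
      · have hge : (u ++ wm).length ≤ i := by simp [hwml]; omega
        have hjv : i - (u ++ wm).length < v.length := by simp [hwml]; omega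
        rw [List.getElem_append_right hge]
        rw [getElem_of_word hve _ hjv]
        have hmem : (i : ℤ) + 1 ∈ Ω₂ := by simp only [hΩ₂, Finset.mem_Icc]; omega
        rw [hx2 ((i : ℤ) + 1) hmem]
        simp only [hx₂def, shiftZ]
        congr 1
        have : (u ++ wm).length = L₁ + N := by simp [hwml, hL₁]
        rw [this]
        omega
  · rintro ⟨N₀, hL⟩
    refine ⟨Finset.Icc (-(N₀ : ℤ)) (N₀ : ℤ), ?_⟩
    intro Ω₁ Ω₂ hdisj x₁ hx₁ x₂ hx₂
    apply glue_sets hsh hL (Ω₁.card + Ω₂.card) Ω₁ Ω₂ le_rfl _ x₁ hx₁ x₂ hx₂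
    intro m hm n hn
    by_contra h
    push_neg at h
    have hmem : n ∈ plusNbhdZ (Ω₁ : Set ℤ) ((Finset.Icc (-(N₀ : ℤ)) (N₀ : ℤ) : Finset ℤ) : Set ℤ) := by
      refine ⟨m - n, ?_, by simpa using hm⟩
      simp only [Finset.coe_Icc, Set.mem_Icc]
      rw [abs_le] at h
      omega
    have : n ∈ (∅ : Set ℤ) := hdisj ▸ Set.mem_inter hmem (by simpa using hn)
    exact this
end

section
/- Let A be a finite set and let X ⊆ A^ℤ be a sofic subshift. Then X is strongly irreducible if and only if X is topologically mixing. -/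
open Pointwise Filter

/-- A sofic subshift: the set of configurations represented by bi-infinite paths
in a finite `A`-labeled graph. -/
def IsSofic {A : Type*} (X : Set (ℤ → A)) : Prop :=
  ∃ (Q : Type) (_ : Fintype Q) (Edges : Set (Q × A × Q)),
    X = {x : ℤ → A | ∃ q : ℤ → Q, ∀ n : ℤ, (q n, x n, q (n + 1)) ∈ Edges}

/-- Topological mixing for a subshift of `A^ℤ`. -/
def TopologicallyMixingZ {A : Type*} [TopologicalSpace A] (X : Set (ℤ → A)) : Prop :=
  ∀ U V : Set (ℤ → A), IsOpen U → IsOpen V → (U ∩ X).Nonempty → (V ∩ X).Nonempty →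
    ∃ F : Finset ℤ, ∀ n : ℤ, n ∉ F → ((U ∩ X) ∩ (shiftZ n '' (V ∩ X))).Nonempty

section Aux

variable {A : Type*} {Q : Type*}

lemma isOpen_cyl [TopologicalSpace A] [DiscreteTopology A] (s : Finset ℤ) (c : ℤ → A) :
    IsOpen {z : ℤ → A | ∀ m ∈ s, z m = c m} := by
  have h : {z : ℤ → A | ∀ m ∈ s, z m = c m} = ⋂ m ∈ s, (fun z : ℤ → A => z m) ⁻¹' {c m} := by
    ext z; simp
  rw [h]
  exact isOpen_biInter_finset fun m _ => (continuous_apply m).isOpen_preimage _ (isOpen_discrete _)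

lemma exists_finset_cyl [TopologicalSpace A] [DiscreteTopology A] {U : Set (ℤ → A)}
    (hU : IsOpen U) {x : ℤ → A} (hx : x ∈ U) :
    ∃ s : Finset ℤ, ∀ z : ℤ → A, (∀ m ∈ s, z m = x m) → z ∈ U := by
  obtain ⟨I, u, hu, hsub⟩ := isOpen_pi_iff.mp hU x hx
  refine ⟨I, fun z hz => hsub ?_⟩
  intro a ha
  have ha' : a ∈ I := ha
  rw [hz a ha']
  exact (hu a ha').2

/-- States reachable at time 1 after reading `x` on `[-k,0]` inside `X`. -/
def PkSet (X : Set (ℤ → A)) (E : Set (Q × A × Q)) (k : ℕ) (x : ℤ → A) : Set Q :=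
  {q | ∃ z ∈ X, (∀ m ∈ Finset.Icc (-(k : ℤ)) 0, z m = x m) ∧
    ∃ qq : ℤ → Q, (∀ m : ℤ, (qq m, z m, qq (m + 1)) ∈ E) ∧ qq 1 = q}

/-- States at time 1 from which `y` can be read on `[1,k]` inside `X`. -/
def FkSet (X : Set (ℤ → A)) (E : Set (Q × A × Q)) (k : ℕ) (y : ℤ → A) : Set Q :=
  {q | ∃ z ∈ X, (∀ m ∈ Finset.Icc (1 : ℤ) (k : ℤ), z m = y m) ∧
    ∃ qq : ℤ → Q, (∀ m : ℤ, (qq m, z m, qq (m + 1)) ∈ E) ∧ qq 1 = q}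

/-- There is a path of length `n` in the graph from a state in `S` to a state in `T`. -/
def GoodPath (E : Set (Q × A × Q)) (S T : Set Q) (n : ℕ) : Prop :=
  ∃ (qs : ℕ → Q) (ls : ℕ → A), qs 0 ∈ S ∧ qs n ∈ T ∧ ∀ i < n, (qs i, ls i, qs (i + 1)) ∈ E

lemma PkSet_antitone (X : Set (ℤ → A)) (E : Set (Q × A × Q)) {k k' : ℕ} (h : k ≤ k') (x : ℤ → A) :
    PkSet X E k' x ⊆ PkSet X E k x := by
  rintro q ⟨z, hz, hm, hq⟩
  refine ⟨z, hz, fun m hm' => hm m ?_, hq⟩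
  simp only [Finset.mem_Icc] at hm' ⊢; omega

lemma FkSet_antitone (X : Set (ℤ → A)) (E : Set (Q × A × Q)) {k k' : ℕ} (h : k ≤ k') (y : ℤ → A) :
    FkSet X E k' y ⊆ FkSet X E k y := by
  rintro q ⟨z, hz, hm, hq⟩
  refine ⟨z, hz, fun m hm' => hm m ?_, hq⟩
  simp only [Finset.mem_Icc] at hm' ⊢; omega

lemma goodPath_mono {E : Set (Q × A × Q)} {S S' T T' : Set Q} (hS : S ⊆ S') (hT : T ⊆ T') {n : ℕ} :
    GoodPath E S T n → GoodPath E S' T' n := by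
  rintro ⟨qs, ls, h0, h1, h2⟩; exact ⟨qs, ls, hS h0, hT h1, h2⟩

lemma stab [Finite Q] (P : ℕ → Set Q) (hP : ∀ {k k' : ℕ}, k ≤ k' → P k' ⊆ P k) :
    ∃ k₀ : ℕ, ∀ k, P k₀ ⊆ P k := by
  obtain ⟨k₀, hk₀⟩ : ∃ k₀, (P k₀).ncard = sInf (Set.range fun k => (P k).ncard) :=
    Nat.sInf_mem (s := Set.range fun k => (P k).ncard) ⟨(P 0).ncard, ⟨0, rfl⟩⟩
  refine ⟨k₀, fun k => ?_⟩
  rcases le_total k k₀ with h | h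
  · exact hP h
  · have heq : P k = P k₀ := by
      refine Set.eq_of_subset_of_ncard_le (hP h) ?_ (Set.toFinite _)
      rw [hk₀]; exact Nat.sInf_le ⟨k, rfl⟩
    rw [heq]

/-- From a good path, glue the past of `x` with the (shifted) future of `y`. -/
lemma glue_of_good {X : Set (ℤ → A)} {E : Set (Q × A × Q)}
    (hXeq : X = {x : ℤ → A | ∃ q : ℤ → Q, ∀ n : ℤ, (q n, x n, q (n + 1)) ∈ E})
    {k n : ℕ} {x y : ℤ → A}
    (h : GoodPath E (PkSet X E k x) (FkSet X E k y) n) :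
    ∃ z ∈ X, (∀ m ∈ Finset.Icc (-(k : ℤ)) 0, z m = x m) ∧
      (∀ m : ℤ, (n : ℤ) < m → m ≤ (n : ℤ) + k → z m = y (m - n)) := by
  obtain ⟨qs, ls, hp, hq, hpath⟩ := h
  obtain ⟨z₁, hz₁X, hz₁m, qq₁, hE₁, hq₁⟩ := hp
  obtain ⟨z₂, hz₂X, hz₂m, qq₂, hE₂, hq₂⟩ := hq
  classical
  refine ⟨fun m => if m ≤ 0 then z₁ m else if m ≤ (n : ℤ) then ls (m - 1).toNat else z₂ (m - n),
    ?_, ?_, ?_⟩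
  · rw [hXeq]
    refine ⟨fun m => if m ≤ 0 then qq₁ m else if m ≤ (n : ℤ) + 1 then qs (m - 1).toNat
      else qq₂ (m - n), fun m => ?_⟩
    simp only []
    split_ifs <;> try omega
    · exact hE₁ m
    · have hm0 : m = 0 := by omega
      subst hm0
      have e : ((0 : ℤ) + 1 - 1).toNat = 0 := by omega
      rw [e, ← hq₁]
      exact hE₁ 0
    · have e : (m + 1 - 1).toNat = (m - 1).toNat + 1 := by omega
      rw [e]
      exact hpath _ (by omega)
    · have e1 : (m - 1).toNat = n := by omega
      have e2 : m - (n : ℤ) = 1 := by omega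
      have e3 : m + 1 - (n : ℤ) = 1 + 1 := by omega
      rw [e1, ← hq₂, e2, e3]
      exact hE₂ 1
    · have e : m + 1 - (n : ℤ) = (m - n) + 1 := by ring
      rw [e]
      exact hE₂ _
  · intro m hm
    simp only [Finset.mem_Icc] at hm
    beta_reduce
    rw [if_pos hm.2]
    exact hz₁m m (by simp only [Finset.mem_Icc]; omega)
  · intro m h1 h2
    beta_reduce
    rw [if_neg (by omega : ¬ m ≤ 0), if_neg (by omega : ¬ m ≤ (n : ℤ))]
    exact hz₂m _ (by simp only [Finset.mem_Icc]; omega)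

/-- Mixing yields, for every pair of configurations and every window, a bound past which
good paths exist. -/
lemma exists_bound [TopologicalSpace A] [DiscreteTopology A]
    {X : Set (ℤ → A)} {E : Set (Q × A × Q)}
    (hXeq : X = {x : ℤ → A | ∃ q : ℤ → Q, ∀ n : ℤ, (q n, x n, q (n + 1)) ∈ E})
    (hmix : TopologicallyMixingZ X) {x y : ℤ → A} (hx : x ∈ X) (hy : y ∈ X) (k : ℕ) :
    ∃ b : ℕ, ∀ n : ℕ, b ≤ n → GoodPath E (PkSet X E k x) (FkSet X E k y) n := by
  set U : Set (ℤ → A) := {z | ∀ m ∈ Finset.Icc (-(k : ℤ)) 0, z m = x m} with hU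
  set V : Set (ℤ → A) := {z | ∀ m ∈ Finset.Icc (1 : ℤ) (k : ℤ), z m = y m} with hV
  obtain ⟨F, hF⟩ := hmix U V (isOpen_cyl _ _) (isOpen_cyl _ _)
    ⟨x, fun m _ => rfl, hx⟩ ⟨y, fun m _ => rfl, hy⟩
  refine ⟨F.sup Int.toNat + 1, fun n hn => ?_⟩
  have hnF : (n : ℤ) ∉ F := by
    intro hmem
    have h2 := Finset.le_sup (f := Int.toNat) hmem
    simp only [Int.toNat_natCast] at h2
    omega
  obtain ⟨z, ⟨hzU, hzX⟩, w, ⟨hwV, hwX⟩, hwz⟩ := hF (n : ℤ) hnF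
  obtain ⟨qq, hqq⟩ : ∃ q : ℤ → Q, ∀ m : ℤ, (q m, z m, q (m + 1)) ∈ E := by
    rw [hXeq] at hzX; exact hzX
  have hwzm : ∀ m : ℤ, w m = z (m + n) := by
    intro m
    have : shiftZ (n : ℤ) w (m + n) = z (m + n) := by rw [hwz]
    simpa [shiftZ] using this
  refine ⟨fun i => qq (1 + (i : ℤ)), fun i => z (1 + (i : ℤ)), ?_, ?_, ?_⟩
  · exact ⟨z, hzX, hzU, qq, hqq, by norm_num⟩
  · refine ⟨w, hwX, hwV, fun m => qq (m + (n : ℤ)), fun m => ?_, by push_cast; ring_nf⟩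
    beta_reduce
    rw [hwzm m, show m + 1 + (n : ℤ) = m + (n : ℤ) + 1 by ring]
    exact hqq (m + n)
  · intro i _
    beta_reduce
    have e : (1 : ℤ) + ((i : ℕ) + 1 : ℕ) = (1 + (i : ℤ)) + 1 := by push_cast; ring
    rw [e]
    exact hqq _

/-- The uniform gluing bound for a mixing sofic shift. -/
lemma uniform_bound [TopologicalSpace A] [DiscreteTopology A] [Finite Q]
    {X : Set (ℤ → A)} {E : Set (Q × A × Q)}
    (hXeq : X = {x : ℤ → A | ∃ q : ℤ → Q, ∀ n : ℤ, (q n, x n, q (n + 1)) ∈ E})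
    (hmix : TopologicallyMixingZ X) :
    ∃ N : ℕ, ∀ n : ℕ, N ≤ n → ∀ x ∈ X, ∀ y ∈ X, ∀ k : ℕ,
      GoodPath E (PkSet X E k x) (FkSet X E k y) n := by
  classical
  have hP : ∀ x : ℤ → A, ∃ k₀ : ℕ, ∀ k, PkSet X E k₀ x ⊆ PkSet X E k x :=
    fun x => stab _ (fun h => PkSet_antitone X E h x)
  have hF : ∀ y : ℤ → A, ∃ k₀ : ℕ, ∀ k, FkSet X E k₀ y ⊆ FkSet X E k y :=
    fun y => stab _ (fun h => FkSet_antitone X E h y)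
  choose kP hkP using hP
  choose kF hkF using hF
  set Sx : (ℤ → A) → Set Q := fun x => PkSet X E (kP x) x with hSx
  set Ty : (ℤ → A) → Set Q := fun y => FkSet X E (kF y) y with hTy
  have pair : ∀ x ∈ X, ∀ y ∈ X, ∃ b : ℕ, ∀ n : ℕ, b ≤ n → GoodPath E (Sx x) (Ty y) n := by
    intro x hx y hy
    obtain ⟨b, hb⟩ := exists_bound hXeq hmix hx hy (max (kP x) (kF y))
    refine ⟨b, fun n hn => ?_⟩
    exact goodPath_mono (PkSet_antitone X E (le_max_left _ _) x)
      (FkSet_antitone X E (le_max_right _ _) y) (hb n hn)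
  have key : ∀ ST : Set Q × Set Q, ∃ b : ℕ, ∀ x ∈ X, ∀ y ∈ X,
      Sx x = ST.1 → Ty y = ST.2 → ∀ n : ℕ, b ≤ n → GoodPath E (Sx x) (Ty y) n := by
    intro ST
    by_cases hex : ∃ x ∈ X, ∃ y ∈ X, Sx x = ST.1 ∧ Ty y = ST.2
    · obtain ⟨x, hx, y, hy, h1, h2⟩ := hex
      obtain ⟨b, hb⟩ := pair x hx y hy
      refine ⟨b, fun x' _ y' _ h1' h2' n hn => ?_⟩
      rw [h1', h2', ← h1, ← h2]
      exact hb n hn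
    · exact ⟨0, fun x' hx' y' hy' h1' h2' => absurd ⟨x', hx', y', hy', h1', h2'⟩ hex⟩
  choose bf hbf using key
  obtain ⟨N, hN⟩ := (Set.finite_range bf).bddAbove
  refine ⟨N, fun n hn x hx y hy k => ?_⟩
  have hg : GoodPath E (Sx x) (Ty y) n :=
    hbf (Sx x, Ty y) x hx y hy rfl rfl n (le_trans (hN ⟨(Sx x, Ty y), rfl⟩) hn)
  exact goodPath_mono (hkP x k) (hkF y k) hg

end Aux

lemma mixing_of_si {A : Type*} [TopologicalSpace A] [DiscreteTopology A] {X : Set (ℤ → A)}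
    (hinv : ∀ n : ℤ, ∀ x ∈ X, shiftZ n x ∈ X) (h : StronglyIrreducibleZ X) :
    TopologicallyMixingZ X := by
  obtain ⟨Δ, hΔ⟩ := h
  intro U V hU hV ⟨x, hxU, hxX⟩ ⟨y, hyV, hyX⟩
  obtain ⟨Ω₁, hΩ₁⟩ := exists_finset_cyl hU hxU
  obtain ⟨Ω₂, hΩ₂⟩ := exists_finset_cyl hV hyV
  refine ⟨Finset.image (fun p : ℤ × ℤ × ℤ => p.1 - p.2.1 - p.2.2) (Ω₁ ×ˢ Δ ×ˢ Ω₂), fun n hn => ?_⟩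
  have hsep : plusNbhdZ (Ω₁ : Set ℤ) (Δ : Set ℤ) ∩ ((Ω₂.image (· + n) : Finset ℤ) : Set ℤ) = ∅ := by
    ext m
    simp only [Set.mem_inter_iff, Set.mem_empty_iff_false, iff_false, not_and]
    rintro ⟨d, hd, hmd⟩ hm
    simp only [Finset.coe_image, Set.mem_image, Finset.mem_coe] at hm
    obtain ⟨ω₂, hω₂, rfl⟩ := hm
    refine hn ?_
    refine Finset.mem_image.mpr ⟨(ω₂ + n + d, d, ω₂), ?_, by ring⟩
    simp only [Finset.mem_product]
    exact ⟨hmd, hd, hω₂⟩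
  obtain ⟨z, hzX, hz1, hz2⟩ := hΔ Ω₁ (Ω₂.image (· + n)) hsep x hxX (shiftZ n y) (hinv n y hyX)
  refine ⟨z, ⟨hΩ₁ z hz1, hzX⟩, shiftZ (-n) z, ⟨?_, hinv (-n) z hzX⟩, ?_⟩
  · refine hΩ₂ _ ?_
    intro m hm
    have hmem : m + n ∈ Ω₂.image (· + n) := Finset.mem_image.mpr ⟨m, hm, rfl⟩
    have := hz2 _ hmem
    show z (m - -n) = y m
    rw [show m - -n = m + n by ring, this]
    show y (m + n - n) = y m
    congr 1; ring
  · funext m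
    show z (m - n - -n) = z m
    congr 1; ring

lemma si_of_mixing {A : Type*} [TopologicalSpace A] [DiscreteTopology A] {X : Set (ℤ → A)}
    (hX : IsSubshiftZ X) (hsofic : IsSofic X) (hmix : TopologicallyMixingZ X) :
    StronglyIrreducibleZ X := by
  classical
  obtain ⟨Q, hQ, E, hXeq⟩ := hsofic
  haveI : Fintype Q := hQ
  obtain ⟨N, hN⟩ := uniform_bound hXeq hmix
  have gap : ∀ n : ℕ, N ≤ n → ∀ x ∈ X, ∀ y ∈ X, ∀ k : ℕ,
      ∃ z ∈ X, (∀ m ∈ Finset.Icc (-(k : ℤ)) 0, z m = x m) ∧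
        (∀ m : ℤ, (n : ℤ) < m → m ≤ (n : ℤ) + k → z m = y (m - n)) :=
    fun n hn x hx y hy k => glue_of_good hXeq (hN n hn x hx y hy k)
  have pglue : ∀ x ∈ X, ∀ y ∈ X, ∀ a b : ℤ, a + N < b → ∀ k : ℕ,
      ∃ z ∈ X, (∀ m : ℤ, a - k ≤ m → m ≤ a → z m = x m) ∧
        (∀ m : ℤ, b ≤ m → m ≤ b + k → z m = y m) := by
    intro x hx y hy a b hab k
    set n : ℕ := (b - a - 1).toNat with hn
    have hnz : (n : ℤ) = b - a - 1 := by omega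
    have hnle : N ≤ n := by omega
    obtain ⟨z₀, hz₀X, h1, h2⟩ := gap n hnle (shiftZ (-a) x) (hX.2 _ x hx)
      (shiftZ (-(b - 1)) y) (hX.2 _ y hy) (k + 1)
    refine ⟨shiftZ a z₀, hX.2 _ _ hz₀X, ?_, ?_⟩
    · intro m hm1 hm2
      show z₀ (m - a) = x m
      rw [h1 (m - a) (by simp only [Finset.mem_Icc]; push_cast; omega)]
      show x (m - a - -a) = x m
      congr 1; ring
    · intro m hm1 hm2
      show z₀ (m - a) = y m
      rw [h2 (m - a) (by omega) (by push_cast; omega)]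
      show y (m - a - n - -(b - 1)) = y m
      congr 1; omega
  -- multi-block gluing by induction on the number of constrained coordinates
  have ind : ∀ c : ℕ, ∀ Ω₁ Ω₂ : Finset ℤ, (Ω₁ ∪ Ω₂).card ≤ c →
      (∀ ω₁ ∈ Ω₁, ∀ ω₂ ∈ Ω₂, (N : ℤ) < |ω₁ - ω₂|) →
      ∀ x₁ ∈ X, ∀ x₂ ∈ X,
        ∃ z ∈ X, (∀ m ∈ Ω₁, z m = x₁ m) ∧ (∀ m ∈ Ω₂, z m = x₂ m) := by
    intro c
    induction c with
    | zero =>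
      intro Ω₁ Ω₂ hcard hsep x₁ hx₁ x₂ hx₂
      have h1 : Ω₁ = ∅ := by
        have := Finset.card_eq_zero.mp (Nat.le_zero.mp hcard)
        exact Finset.eq_empty_of_forall_notMem fun m hm =>
          (Finset.eq_empty_iff_forall_notMem.mp this m) (Finset.mem_union_left _ hm)
      have h2 : Ω₂ = ∅ := by
        have := Finset.card_eq_zero.mp (Nat.le_zero.mp hcard)
        exact Finset.eq_empty_of_forall_notMem fun m hm =>
          (Finset.eq_empty_iff_forall_notMem.mp this m) (Finset.mem_union_right _ hm)
      subst h1; subst h2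
      exact ⟨x₁, hx₁, fun m hm => by simp at hm, fun m hm => by simp at hm⟩
    | succ c IH =>
      intro Ω₁ Ω₂ hcard hsep x₁ hx₁ x₂ hx₂
      rcases Finset.eq_empty_or_nonempty Ω₂ with h2 | h2
      · subst h2
        exact ⟨x₁, hx₁, fun m hm => rfl, fun m hm => by simp at hm⟩
      rcases Finset.eq_empty_or_nonempty Ω₁ with h1 | h1
      · subst h1
        exact ⟨x₂, hx₂, fun m hm => by simp at hm, fun m hm => rfl⟩
      -- core step: the larger max belongs to Γ₂
      have core : ∀ (Γ₁ Γ₂ : Finset ℤ) (y₁ : ℤ → A), y₁ ∈ X → ∀ y₂ : ℤ → A, y₂ ∈ X →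
          (Γ₁ ∪ Γ₂).card ≤ c + 1 →
          (∀ a ∈ Γ₁, ∀ b ∈ Γ₂, (N : ℤ) < |a - b|) →
          ∀ (hΓ₁ : Γ₁.Nonempty) (hΓ₂ : Γ₂.Nonempty), Γ₁.max' hΓ₁ < Γ₂.max' hΓ₂ →
          ∃ z ∈ X, (∀ m ∈ Γ₁, z m = y₁ m) ∧ (∀ m ∈ Γ₂, z m = y₂ m) := by
        intro Γ₁ Γ₂ y₁ hy₁ y₂ hy₂ hcard' hsep' hΓ₁ hΓ₂ hlt
        set t : ℤ := Γ₁.max' hΓ₁ with ht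
        set s : ℤ := Γ₂.max' hΓ₂ with hs
        set Γ₂' : Finset ℤ := Γ₂.filter (· ≤ t) with hΓ₂'
        have hsmem : s ∈ Γ₂ := Γ₂.max'_mem hΓ₂
        have hsub : Γ₁ ∪ Γ₂' ⊆ (Γ₁ ∪ Γ₂).erase s := by
          intro m hm
          rcases Finset.mem_union.mp hm with hm1 | hm2
          · refine Finset.mem_erase.mpr ⟨?_, Finset.mem_union_left _ hm1⟩
            intro hms
            have := Finset.le_max' Γ₁ m hm1
            omega
          · have hm2' := Finset.mem_filter.mp hm2
            refine Finset.mem_erase.mpr ⟨?_, Finset.mem_union_right _ hm2'.1⟩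
            intro hms
            have := hm2'.2
            omega
        have hcard'' : (Γ₁ ∪ Γ₂').card ≤ c := by
          have h3 := Finset.card_le_card hsub
          have h4 : ((Γ₁ ∪ Γ₂).erase s).card = (Γ₁ ∪ Γ₂).card - 1 :=
            Finset.card_erase_of_mem (Finset.mem_union_right _ hsmem)
          have h5 : 1 ≤ (Γ₁ ∪ Γ₂).card :=
            Finset.card_pos.mpr ⟨s, Finset.mem_union_right _ hsmem⟩
          omega
        obtain ⟨w, hwX, hw1, hw2⟩ := IH Γ₁ Γ₂' hcard''
          (fun a ha b hb => hsep' a ha b (Finset.mem_filter.mp hb).1) y₁ hy₁ y₂ hy₂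
        -- now glue w (on (-∞, t]) with y₂ (on [t+N+1, ∞))
        set L : ℤ := (Γ₁ ∪ Γ₂).min' ⟨t, Finset.mem_union_left _ (Γ₁.max'_mem hΓ₁)⟩ with hL
        have hLle : ∀ m ∈ Γ₁ ∪ Γ₂, L ≤ m := fun m hm => Finset.min'_le _ m hm
        have hsle : ∀ m ∈ Γ₁ ∪ Γ₂, m ≤ s := by
          intro m hm
          rcases Finset.mem_union.mp hm with hm1 | hm2
          · have := Finset.le_max' Γ₁ m hm1; omega
          · exact Finset.le_max' Γ₂ m hm2
        set K : ℕ := (t - L).toNat + (s - t).toNat with hK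
        obtain ⟨z, hzX, hz1, hz2⟩ := pglue w hwX y₂ hy₂ t (t + N + 1) (by omega) K
        refine ⟨z, hzX, ?_, ?_⟩
        · intro m hm
          have hmu : m ∈ Γ₁ ∪ Γ₂ := Finset.mem_union_left _ hm
          have hmt : m ≤ t := Finset.le_max' Γ₁ m hm
          rw [hz1 m (by have := hLle m hmu; omega) hmt]
          exact hw1 m hm
        · intro m hm
          have hmu : m ∈ Γ₁ ∪ Γ₂ := Finset.mem_union_right _ hm
          by_cases hmt : m ≤ t
          · rw [hz1 m (by have := hLle m hmu; omega) hmt]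
            exact hw2 m (Finset.mem_filter.mpr ⟨hm, hmt⟩)
          · have hdist : (N : ℤ) < |t - m| := hsep' t (Γ₁.max'_mem hΓ₁) m hm
            have hm1 : t + N + 1 ≤ m := by
              rcases abs_cases (t - m) with ⟨he, _⟩ | ⟨he, _⟩ <;> omega
            have hm2 : m ≤ t + N + 1 + K := by
              have := hsle m hmu
              have hts : t ≤ s := by omega
              have hLt : L ≤ t := hLle t (Finset.mem_union_left _ (Γ₁.max'_mem hΓ₁))
              omega
            rw [hz2 m hm1 hm2]
      -- apply core in the two symmetric cases
      have hmax : (Ω₁.max' h1) ≠ (Ω₂.max' h2) := by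
        intro he
        have := hsep (Ω₁.max' h1) (Ω₁.max'_mem h1) (Ω₂.max' h2) (Ω₂.max'_mem h2)
        rw [he] at this
        simp at this
        omega
      rcases lt_or_gt_of_ne hmax with hlt | hgt
      · exact core Ω₁ Ω₂ x₁ hx₁ x₂ hx₂ hcard hsep h1 h2 hlt
      · obtain ⟨z, hzX, hza, hzb⟩ := core Ω₂ Ω₁ x₂ hx₂ x₁ hx₁
          (by rwa [Finset.union_comm])
          (fun a ha b hb => by rw [abs_sub_comm]; exact hsep b hb a ha) h2 h1 hgt
        exact ⟨z, hzX, hzb, hza⟩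
  refine ⟨Finset.Icc (-(N : ℤ)) (N : ℤ), fun Ω₁ Ω₂ hdisj x₁ hx₁ x₂ hx₂ => ?_⟩
  refine ind (Ω₁ ∪ Ω₂).card Ω₁ Ω₂ le_rfl ?_ x₁ hx₁ x₂ hx₂
  intro ω₁ hω₁ ω₂ hω₂
  by_contra hc
  push_neg at hc
  have hd : ω₁ - ω₂ ∈ (Finset.Icc (-(N : ℤ)) (N : ℤ)) := by
    simp only [Finset.mem_Icc]
    rcases abs_cases (ω₁ - ω₂) with ⟨he, _⟩ | ⟨he, _⟩ <;> omega
  have : ω₂ ∈ plusNbhdZ (Ω₁ : Set ℤ) ((Finset.Icc (-(N : ℤ)) (N : ℤ) : Finset ℤ) : Set ℤ) ∩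
      (Ω₂ : Set ℤ) := by
    refine ⟨⟨ω₁ - ω₂, hd, ?_⟩, hω₂⟩
    rw [show ω₂ + (ω₁ - ω₂) = ω₁ by ring]
    exact hω₁
  rw [hdisj] at this
  exact this

/-- A sofic subshift over `ℤ` is strongly irreducible iff it is topologically mixing. -/
theorem sofic_stronglyIrreducible_iff_mixing {A : Type*} [Fintype A]
    [TopologicalSpace A] [DiscreteTopology A]
    (X : Set (ℤ → A)) (hX : IsSubshiftZ X) (hsofic : IsSofic X) :
    StronglyIrreducibleZ X ↔ TopologicallyMixingZ X :=
  ⟨fun h => mixing_of_si hX.2 h, fun h => si_of_mixing hX hsofic h⟩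
end

section
/- Let G be an amenable group with Følner net F = (F_j)_{j∈J}, let A and B be finite sets, and let τ : X → Y be a cellular automaton between subshifts X ⊆ A^G and Y ⊆ B^G. Then for every subset Z ⊆ X one has ent_F(τ(Z)) ≤ ent_F(Z). -/
open Pointwise Filter

variable {G : Type*} [Group G]

/-- The shift action of `G` on configurations: `(g • x)(h) = x(g⁻¹h)`. -/
def shift {A : Type*} (g : G) (x : G → A) : G → A := fun h => x (g⁻¹ * h)

/-- A subshift: a closed, shift-invariant subset of `A^G` (prodiscrete topology). -/
def IsSubshift {A : Type*} [TopologicalSpace A] (X : Set (G → A)) : Prop :=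
  IsClosed X ∧ ∀ g : G, ∀ x ∈ X, shift g x ∈ X

/-- The `Δ`-neighborhood `Ω^{+Δ} = ΩΔ⁻¹ = {g : gΔ ∩ Ω ≠ ∅}`. -/
def plusNbhd (Ω Δ : Set G) : Set G := {g : G | ∃ d ∈ Δ, g * d ∈ Ω}

/-- `Δ`-irreducibility of a subshift. -/
def DeltaIrreducible {A : Type*} (Δ : Finset G) (X : Set (G → A)) : Prop :=
  ∀ Ω₁ Ω₂ : Finset G,
    plusNbhd (Ω₁ : Set G) (Δ : Set G) ∩ (Ω₂ : Set G) = ∅ →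
    ∀ x₁ ∈ X, ∀ x₂ ∈ X,
      ∃ x ∈ X, (∀ g ∈ Ω₁, x g = x₁ g) ∧ (∀ g ∈ Ω₂, x g = x₂ g)

/-- Strong irreducibility: `Δ`-irreducible for some finite `Δ ⊆ G`. -/
def StronglyIrreducible {A : Type*} (X : Set (G → A)) : Prop :=
  ∃ Δ : Finset G, DeltaIrreducible Δ X

/-- A cellular automaton between subshifts `X ⊆ A^G` and `Y ⊆ B^G`:
a map that sends `X` into `Y`, is continuous on `X`, and is `G`-equivariant on `X`. -/
def IsCellularAutomaton {A B : Type*} [TopologicalSpace A] [TopologicalSpace B]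
    (X : Set (G → A)) (Y : Set (G → B)) (τ : (G → A) → (G → B)) : Prop :=
  Set.MapsTo τ X Y ∧ ContinuousOn τ X ∧ ∀ g : G, ∀ x ∈ X, τ (shift g x) = shift g (τ x)

/-- Pre-injectivity of a map on a subshift `X`. -/
def PreInjective {A B : Type*} (X : Set (G → A)) (τ : (G → A) → (G → B)) : Prop :=
  ∀ x₁ ∈ X, ∀ x₂ ∈ X, {g : G | x₁ g ≠ x₂ g}.Finite → τ x₁ = τ x₂ → x₁ = x₂

/-- A Følner net for `G`, indexed by a directed preorder `J`. -/
def IsFolnerNet {J : Type*} [Preorder J] (F : J → Finset G) : Prop :=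
  (∀ j, (F j).Nonempty) ∧
  ∀ E : Finset G,
    Tendsto (fun j => ((plusNbhd (F j : Set G) (E : Set G) \ (F j : Set G)).ncard : ℝ) /
        ((F j).card : ℝ)) atTop (nhds 0)

/-- The entropy of a subset `X ⊆ A^G` with respect to a Følner net `F`. -/
noncomputable def entropy {J A : Type*} [Preorder J] (F : J → Finset G) (X : Set (G → A)) : ℝ :=
  limsup (fun j => Real.log (((Set.restrict (F j : Set G)) '' X).ncard : ℝ) / ((F j).card : ℝ))
    atTop

/-- Topological mixing for a subshift (open subsets of `X` are traces of ambient opens). -/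
def TopologicallyMixing {A : Type*} [TopologicalSpace A] (X : Set (G → A)) : Prop :=
  ∀ U V : Set (G → A), IsOpen U → IsOpen V → (U ∩ X).Nonempty → (V ∩ X).Nonempty →
    ∃ F : Finset G, ∀ g : G, g ∉ F → ((U ∩ X) ∩ (shift g '' (V ∩ X))).Nonempty

/-- An `(E,E')`-tiling. -/
def IsTiling (E E' T : Set G) : Prop :=
  T.PairwiseDisjoint (fun g => g • E) ∧ (⋃ g ∈ T, g • E') = Set.univ

/-- Memory-set lemma. -/
lemma exists_memory {A B : Type*} [Fintype A]
    [TopologicalSpace A] [DiscreteTopology A] [TopologicalSpace B] [DiscreteTopology B]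
    (X : Set (G → A)) (Y : Set (G → B)) (hX : IsSubshift X)
    (τ : (G → A) → (G → B)) (hτ : IsCellularAutomaton X Y τ) :
    ∃ M : Finset G, (1 : G) ∈ M ∧
      ∀ x ∈ X, ∀ y ∈ X, ∀ g : G, (∀ m ∈ M, x (g * m) = y (g * m)) → τ x g = τ y g := by
  classical
  have hcomp : IsCompact X := hX.1.isCompact
  -- local rule at the identity around each point
  have h1 : ∀ x ∈ X, ∃ S : Finset G, ∀ y ∈ X, (∀ m ∈ S, y m = x m) → τ y 1 = τ x 1 := by
    intro x hx
    have hc : ContinuousOn (fun y => τ y 1) X := (continuous_apply (1 : G)).comp_continuousOn hτ.2.1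
    have hco : ContinuousWithinAt (fun y => τ y 1) X x := hc x hx
    have hmem : (fun y => τ y 1) ⁻¹' {τ x 1} ∈ nhdsWithin x X := by
      refine hco.preimage_mem_nhdsWithin ?_
      exact IsOpen.mem_nhds (isOpen_discrete _) rfl
    obtain ⟨U, hUo, hxU, hUsub⟩ := mem_nhdsWithin.1 hmem
    obtain ⟨I, u, hu, hpi⟩ := isOpen_pi_iff.1 hUo x hxU
    refine ⟨I, fun y hy hyx => ?_⟩
    have hyU : y ∈ U := hpi (fun a ha => by rw [hyx a ha]; exact (hu a ha).2)
    exact hUsub ⟨hyU, hy⟩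
  choose! S hS using h1
  set V : X → Set (G → A) := fun x => {y | ∀ m ∈ S x, y m = x.1 m} with hV
  have hVopen : ∀ x : X, IsOpen (V x) := by
    intro x
    have : V x = Set.pi (S x.1 : Set G) (fun m => {x.1 m}) := by
      ext y; simp [hV, Set.mem_pi]
    rw [this]
    exact isOpen_set_pi (Finset.finite_toSet _) (fun a _ => isOpen_discrete _)
  have hcover : X ⊆ ⋃ x : X, V x := by
    intro x hx
    exact Set.mem_iUnion.2 ⟨⟨x, hx⟩, fun m _ => rfl⟩
  obtain ⟨t, ht⟩ := hcomp.elim_finite_subcover V hVopen hcover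
  refine ⟨insert (1 : G) (t.sup fun x => S x.1), Finset.mem_insert_self _ _, ?_⟩
  -- key : agreement on M determines the value at 1
  have key : ∀ x ∈ X, ∀ y ∈ X,
      (∀ m ∈ insert (1 : G) (t.sup fun x => S x.1), x m = y m) → τ x 1 = τ y 1 := by
    intro x hx y hy hxy
    obtain ⟨i, hit, hxi⟩ : ∃ i ∈ t, x ∈ V i := by
      have := ht hx
      simpa using this
    have hsub : S i.1 ⊆ insert (1 : G) (t.sup fun x => S x.1) := by
      intro m hm
      exact Finset.mem_insert_of_mem (Finset.le_sup (f := fun x => S x.1) hit hm)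
    have hyi : ∀ m ∈ S i.1, y m = i.1 m := fun m hm => ((hxy m (hsub hm)).symm.trans (hxi m hm))
    rw [hS i.1 i.2 x hx hxi, hS i.1 i.2 y hy hyi]
  intro x hx y hy g hxy
  have hx' : shift g⁻¹ x ∈ X := hX.2 g⁻¹ x hx
  have hy' : shift g⁻¹ y ∈ X := hX.2 g⁻¹ y hy
  have hagree : ∀ m ∈ insert (1 : G) (t.sup fun x => S x.1),
      shift g⁻¹ x m = shift g⁻¹ y m := by
    intro m hm
    simpa [shift] using hxy m hm
  have h2 := key _ hx' _ hy' hagree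
  rw [hτ.2.2 g⁻¹ x hx, hτ.2.2 g⁻¹ y hy] at h2
  simpa [shift] using h2

/-- Cellular automata do not increase entropy. -/
theorem entropy_image_le {A B : Type*} [Fintype A] [Fintype B]
    [TopologicalSpace A] [DiscreteTopology A] [TopologicalSpace B] [DiscreteTopology B]
    {J : Type*} [Nonempty J] [Preorder J] [IsDirected J (· ≤ ·)]
    (F : J → Finset G) (hF : IsFolnerNet F)
    (X : Set (G → A)) (Y : Set (G → B)) (hX : IsSubshift X) (hY : IsSubshift Y)
    (τ : (G → A) → (G → B)) (hτ : IsCellularAutomaton X Y τ)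
    (Z : Set (G → A)) (hZ : Z ⊆ X) :
    entropy F (τ '' Z) ≤ entropy F Z := by
  classical
  rcases Z.eq_empty_or_nonempty with rfl | ⟨z₀, hz₀⟩
  · unfold entropy
    simp
  haveI : (atTop : Filter J).NeBot := atTop_neBot_iff.2 ⟨‹Nonempty J›, ‹IsDirected J (· ≤ ·)›⟩
  obtain ⟨M, hM1, hMmem⟩ := exists_memory X Y hX τ hτ
  set N := Fintype.card A with hN
  set L := Real.log ((N : ℝ) + 1) with hLdef
  have hL : 0 ≤ L := Real.log_nonneg (le_add_of_nonneg_left (Nat.cast_nonneg N))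
  -- notation
  set a : J → ℝ := fun j =>
    Real.log (((Set.restrict ((F j : Set G))) '' (τ '' Z)).ncard : ℝ) / ((F j).card : ℝ) with ha
  set b : J → ℝ := fun j =>
    Real.log (((Set.restrict ((F j : Set G))) '' Z).ncard : ℝ) / ((F j).card : ℝ) with hb
  set c : J → ℝ := fun j =>
    ((((F j * M) \ F j : Finset G).card : ℝ) / ((F j).card : ℝ)) * L with hc
  have hcardpos : ∀ j, (0 : ℝ) < ((F j).card : ℝ) := fun j => by
    exact_mod_cast (hF.1 j).card_pos
  -- the pointwise inequality
  have step : ∀ j, a j ≤ b j + c j := by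
    intro j
    set Ω : Finset G := F j * M with hΩ
    have hsub : F j ⊆ Ω := by
      intro g hg
      have : g * 1 ∈ Ω := Finset.mul_mem_mul hg hM1
      simpa using this
    set s : Set (↥(Ω : Set G) → A) := (Set.restrict ((Ω : Set G))) '' Z with hs
    set t : Set (↥(F j : Set G) → B) := (Set.restrict ((F j : Set G))) '' (τ '' Z) with ht
    set r : Set (↥(F j : Set G) → A) := (Set.restrict ((F j : Set G))) '' Z with hr
    set D : Finset G := Ω \ F j with hD
    -- claim 1 : t.ncard ≤ s.ncard
    have claim1 : t.ncard ≤ s.ncard := by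
      set P : (↥(F j : Set G) → B) → Prop :=
        fun v => ∃ z, z ∈ Z ∧ Set.restrict ((F j : Set G)) (τ z) = v with hP
      have hPt : ∀ v ∈ t, P v := by
        rintro v ⟨y, ⟨z, hz, rfl⟩, rfl⟩
        exact ⟨z, hz, rfl⟩
      set f : (↥(F j : Set G) → B) → (↥(Ω : Set G) → A) := fun v =>
        if h : P v then Set.restrict ((Ω : Set G)) h.choose
        else Set.restrict ((Ω : Set G)) z₀ with hf
      have hagree : ∀ z₁ ∈ Z, ∀ z₂ ∈ Z,
          Set.restrict ((Ω : Set G)) z₁ = Set.restrict ((Ω : Set G)) z₂ →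
          Set.restrict ((F j : Set G)) (τ z₁) = Set.restrict ((F j : Set G)) (τ z₂) := by
        intro z₁ hz₁ z₂ hz₂ h
        funext g
        refine hMmem z₁ (hZ hz₁) z₂ (hZ hz₂) g.1 (fun m hm => ?_)
        have hmem : g.1 * m ∈ Ω := Finset.mul_mem_mul (by exact_mod_cast g.2) hm
        exact congrFun h ⟨g.1 * m, by exact_mod_cast hmem⟩
      refine Set.ncard_le_ncard_of_injOn f (fun v hv => ?_) (fun v₁ hv₁ v₂ hv₂ hfv => ?_)
        (Set.toFinite s)
      · have h := hPt v hv
        rw [hf]; simp only [dif_pos h]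
        exact ⟨h.choose, h.choose_spec.1, rfl⟩
      · have h₁ := hPt v₁ hv₁
        have h₂ := hPt v₂ hv₂
        rw [hf] at hfv; simp only [dif_pos h₁, dif_pos h₂] at hfv
        rw [← h₁.choose_spec.2, ← h₂.choose_spec.2]
        exact hagree _ h₁.choose_spec.1 _ h₂.choose_spec.1 hfv
    -- claim 2 : s.ncard ≤ r.ncard * (N+1) ^ D.card
    have claim2 : s.ncard ≤ r.ncard * (N + 1) ^ D.card := by
      set φ : (↥(Ω : Set G) → A) → (↥(F j : Set G) → A) × (↥(D : Set G) → A) := fun u =>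
        (fun g => u ⟨g.1, by exact_mod_cast hsub (by exact_mod_cast g.2)⟩,
         fun g => u ⟨g.1, by
            have : g.1 ∈ D := by exact_mod_cast g.2
            exact_mod_cast (Finset.mem_sdiff.1 this).1⟩) with hφ
      have hmaps : ∀ u ∈ s, φ u ∈ r ×ˢ (Set.univ : Set (↥(D : Set G) → A)) := by
        rintro u ⟨z, hz, rfl⟩
        exact ⟨⟨z, hz, rfl⟩, trivial⟩
      have hinj : Set.InjOn φ s := by
        intro u₁ _ u₂ _ h
        funext g
        have hg : g.1 ∈ Ω := by exact_mod_cast g.2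
        by_cases hgF : g.1 ∈ F j
        · have := congrFun (congrArg Prod.fst h) ⟨g.1, by exact_mod_cast hgF⟩
          simpa [hφ] using this
        · have hgD : g.1 ∈ D := Finset.mem_sdiff.2 ⟨hg, hgF⟩
          have := congrFun (congrArg Prod.snd h) ⟨g.1, by exact_mod_cast hgD⟩
          simpa [hφ] using this
      have h1 : s.ncard ≤ (r ×ˢ (Set.univ : Set (↥(D : Set G) → A))).ncard :=
        Set.ncard_le_ncard_of_injOn φ hmaps hinj (Set.toFinite _)
      have h2 : (r ×ˢ (Set.univ : Set (↥(D : Set G) → A))).ncard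
          = r.ncard * Nat.card (↥(D : Set G) → A) := by
        rw [← Nat.card_coe_set_eq, Nat.card_congr (Equiv.Set.prod _ _), Nat.card_prod,
          Nat.card_coe_set_eq, Nat.card_coe_set_eq, Set.ncard_univ]
      have h3 : Nat.card (↥(D : Set G) → A) = N ^ D.card := by
        rw [Nat.card_fun, Nat.card_eq_fintype_card, Nat.card_coe_set_eq, Set.ncard_coe_finset]
      calc s.ncard ≤ r.ncard * Nat.card (↥(D : Set G) → A) := h2 ▸ h1
        _ = r.ncard * N ^ D.card := by rw [h3]
        _ ≤ r.ncard * (N + 1) ^ D.card :=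
            Nat.mul_le_mul_left _ (Nat.pow_le_pow_left (Nat.le_succ _) _)
    have hrpos : 0 < r.ncard :=
      (Set.ncard_pos (Set.toFinite r)).2 ⟨_, ⟨z₀, hz₀, rfl⟩⟩
    -- logarithms
    have hlog : Real.log (t.ncard : ℝ) ≤ Real.log (r.ncard : ℝ) + (D.card : ℝ) * L := by
      have h1 : (t.ncard : ℝ) ≤ ((r.ncard * (N + 1) ^ D.card : ℕ) : ℝ) := by
        exact_mod_cast claim1.trans claim2
      calc Real.log (t.ncard : ℝ)
          ≤ Real.log ((r.ncard * (N + 1) ^ D.card : ℕ) : ℝ) := by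
            rcases Nat.eq_zero_or_pos t.ncard with h | h
            · rw [h]
              simpa using Real.log_natCast_nonneg (r.ncard * (N + 1) ^ D.card)
            · exact Real.log_le_log (by exact_mod_cast h) h1
        _ = Real.log (r.ncard : ℝ) + (D.card : ℝ) * L := by
            push_cast
            rw [Real.log_mul (by exact_mod_cast hrpos.ne') (by positivity), Real.log_pow, hLdef]
    -- divide by |F j|
    have hdiv : a j ≤ (Real.log (r.ncard : ℝ) + (D.card : ℝ) * L) / ((F j).card : ℝ) := by
      rw [ha]
      exact div_le_div_of_nonneg_right hlog (hcardpos j).le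
    calc a j ≤ (Real.log (r.ncard : ℝ) + (D.card : ℝ) * L) / ((F j).card : ℝ) := hdiv
      _ = b j + c j := by simp only [hb, hc]; ring
  -- the c sequence tends to zero
  have hctend : Tendsto c atTop (nhds 0) := by
    have h0 := (hF.2 M⁻¹).mul_const L
    rw [zero_mul] at h0
    convert h0 using 2 with j
    have hset : plusNbhd ((F j : Set G)) ((M⁻¹ : Finset G) : Set G) = ((F j * M : Finset G) : Set G) := by
      ext g
      simp only [plusNbhd, Set.mem_setOf_eq, Finset.coe_inv, Set.mem_inv, Finset.mem_coe,
        Finset.mem_mul]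
      constructor
      · rintro ⟨d, hd, hgd⟩
        exact ⟨g * d, hgd, d⁻¹, by simpa using hd, by group⟩
      · rintro ⟨x, hx, m, hm, rfl⟩
        exact ⟨m⁻¹, by simpa using hm, by simpa using hx⟩
    rw [hc]
    simp only [hset]
    rw [← Finset.coe_sdiff, Set.ncard_coe_finset]
  -- boundedness facts
  have hb0 : ∀ j, 0 ≤ b j := fun j =>
    div_nonneg (Real.log_natCast_nonneg _) (le_of_lt (hcardpos j))
  have ha0 : ∀ j, 0 ≤ a j := fun j =>
    div_nonneg (Real.log_natCast_nonneg _) (le_of_lt (hcardpos j))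
  have hbL : ∀ j, b j ≤ L := by
    intro j
    have hcard : ((Set.restrict ((F j : Set G))) '' Z).ncard ≤ (N + 1) ^ (F j).card := by
      calc ((Set.restrict ((F j : Set G))) '' Z).ncard
          ≤ (Set.univ : Set (↥(F j : Set G) → A)).ncard :=
            Set.ncard_le_ncard (Set.subset_univ _) (Set.toFinite _)
        _ = Nat.card (↥(F j : Set G) → A) := Set.ncard_univ _
        _ = N ^ (F j).card := by
            rw [Nat.card_fun, Nat.card_eq_fintype_card, Nat.card_coe_set_eq, Set.ncard_coe_finset]
        _ ≤ (N + 1) ^ (F j).card := Nat.pow_le_pow_left (Nat.le_succ _) _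
    have hlog2 : Real.log (((Set.restrict ((F j : Set G))) '' Z).ncard : ℝ)
        ≤ ((F j).card : ℝ) * L := by
      rcases Nat.eq_zero_or_pos ((Set.restrict ((F j : Set G))) '' Z).ncard with h | h
      · rw [h]; push_cast; rw [Real.log_zero]; positivity
      · calc Real.log (((Set.restrict ((F j : Set G))) '' Z).ncard : ℝ)
            ≤ Real.log (((N + 1) ^ (F j).card : ℕ) : ℝ) :=
              Real.log_le_log (by exact_mod_cast h) (by exact_mod_cast hcard)
          _ = ((F j).card : ℝ) * L := by push_cast [Real.log_pow]; rw [hLdef]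
    rw [hb]
    rw [div_le_iff₀ (hcardpos j)]
    linarith [hlog2]
  have hc0 : ∀ j, 0 ≤ c j := fun j =>
    mul_nonneg (div_nonneg (by positivity) (le_of_lt (hcardpos j))) hL
  have hbdc : IsBoundedUnder (· ≤ ·) (atTop : Filter J) c := hctend.isBoundedUnder_le
  have hbdb : IsBoundedUnder (· ≤ ·) (atTop : Filter J) b := isBoundedUnder_of ⟨L, hbL⟩
  have hbdb' : IsBoundedUnder (· ≥ ·) (atTop : Filter J) b := isBoundedUnder_of ⟨0, hb0⟩
  have hcobc : IsCoboundedUnder (· ≤ ·) (atTop : Filter J) c :=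
    (isBoundedUnder_of ⟨0, hc0⟩ : IsBoundedUnder (· ≥ ·) (atTop : Filter J) c).isCoboundedUnder_le
  have hcoba : IsCoboundedUnder (· ≤ ·) (atTop : Filter J) a :=
    (isBoundedUnder_of ⟨0, ha0⟩ : IsBoundedUnder (· ≥ ·) (atTop : Filter J) a).isCoboundedUnder_le
  have hbdbc : IsBoundedUnder (· ≤ ·) (atTop : Filter J) (b + c) :=
    isBoundedUnder_le_add hbdb hbdc
  have hfinal : limsup a atTop ≤ limsup b atTop := by
    calc limsup a atTop ≤ limsup (b + c) atTop :=
          limsup_le_limsup (Eventually.of_forall step) hcoba hbdbc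
      _ ≤ limsup b atTop + limsup c atTop := limsup_add_le hbdb' hbdb hcobc hbdc
      _ = limsup b atTop + 0 := by rw [hctend.limsup_eq]
      _ = limsup b atTop := add_zero _
  exact hfinal
end

section
/- Let G be a group, let E be a nonempty subset of G, and let E' = EE⁻¹ = {ab⁻¹ : a, b ∈ E}. Then G contains an (E, E')-tiling, i.e., there exists T ⊆ G such that the sets gE, g ∈ T, are pairwise disjoint and G = ⋃_{g∈T} gE'. -/
open Pointwise Filter

variable {G : Type*} [Group G]

/-- Every group contains an `(E, EE⁻¹)`-tiling, for any nonempty `E ⊆ G`. -/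
theorem exists_tiling (E : Set G) (hE : E.Nonempty) :
    ∃ T : Set G, IsTiling E (E * E⁻¹) T := by
  have hchainub : ∀ c ⊆ {T : Set G | T.PairwiseDisjoint (fun g => g • E)},
      IsChain (· ⊆ ·) c → ∃ ub ∈ {T : Set G | T.PairwiseDisjoint (fun g => g • E)},
        ∀ s ∈ c, s ⊆ ub := by
    intro c hc hchain
    refine ⟨⋃₀ c, ?_, fun s hs => Set.subset_sUnion_of_mem hs⟩
    rintro s ⟨S, hS, hsS⟩ t ⟨U, hU, htU⟩ hst
    rcases hchain.total hS hU with hSU | hUS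
    · exact hc hU (hSU hsS) htU hst
    · exact hc hS hsS (hUS htU) hst
  obtain ⟨T, hTmem, hTmax⟩ :=
    zorn_subset {T : Set G | T.PairwiseDisjoint (fun g => g • E)} hchainub
  refine ⟨T, hTmem, ?_⟩
  ext g
  simp only [Set.mem_iUnion, Set.mem_univ, iff_true]
  obtain ⟨a, ha⟩ := hE
  by_cases hg : g ∈ T
  · exact ⟨g, hg, a * a⁻¹, Set.mul_mem_mul ha (Set.inv_mem_inv.2 ha), by simp⟩
  · by_contra h
    push_neg at h
    have hins : insert g T ∈ {T : Set G | T.PairwiseDisjoint (fun g => g • E)} := by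
      rw [Set.mem_setOf_eq, Set.pairwiseDisjoint_insert]
      refine ⟨hTmem, fun t ht hne => ?_⟩
      rw [Set.disjoint_left]
      rintro x ⟨a', ha', rfl⟩ ⟨b, hb, hx⟩
      refine h t ht ⟨b * a'⁻¹, Set.mul_mem_mul hb (Set.inv_mem_inv.2 ha'), ?_⟩
      show t * (b * a'⁻¹) = g
      simp only [smul_eq_mul] at hx
      rw [← mul_assoc, hx, mul_inv_cancel_right]
    exact hg (hTmax hins (Set.subset_insert g T) (Set.mem_insert g T))
end

section
/- Let G be a group, let A and B be finite sets, and let τ : A^G → B^G be a cellular automaton. Then the image τ(A^G) is a strongly irreducible subshift of B^G. -/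
open Pointwise Filter

variable {G : Type*} [Group G]

/-- The image of the full shift under a cellular automaton is a strongly
irreducible subshift. -/
theorem image_full_shift_stronglyIrreducible {A B : Type*} [Fintype A] [Fintype B]
    [TopologicalSpace A] [DiscreteTopology A] [TopologicalSpace B] [DiscreteTopology B]
    (τ : (G → A) → (G → B))
    (hτ : IsCellularAutomaton (Set.univ : Set (G → A)) (Set.univ : Set (G → B)) τ) :
    IsSubshift (Set.range τ) ∧ StronglyIrreducible (Set.range τ) := by
  classical
  obtain ⟨hmaps, hcont, hequi⟩ := hτ
  have hcont' : Continuous τ := continuousOn_univ.mp hcont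
  have hf : Continuous fun x : G → A => τ x 1 := (continuous_apply (1 : G)).comp hcont'
  have hx : ∀ x : G → A, ∃ I : Finset G,
      ∀ y : G → A, (∀ g ∈ I, y g = x g) → τ y 1 = τ x 1 := by
    intro x
    have hopen : IsOpen ((fun x : G → A => τ x 1) ⁻¹' {τ x 1}) :=
      hf.isOpen_preimage _ (isOpen_discrete _)
    rw [isOpen_pi_iff] at hopen
    obtain ⟨I, u, hu, hsub⟩ := hopen x rfl
    refine ⟨I, fun y hy => hsub fun g hg => ?_⟩
    rw [hy g hg]; exact (hu g hg).2
  choose I hI using hx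
  have hopenC : ∀ x : G → A, IsOpen {y : G → A | ∀ g ∈ I x, y g = x g} := by
    intro x
    have he : {y : G → A | ∀ g ∈ I x, y g = x g}
        = ⋂ g ∈ I x, (fun y : G → A => y g) ⁻¹' {x g} := by
      ext y; simp
    rw [he]
    exact isOpen_biInter_finset fun g _ =>
      (continuous_apply g).isOpen_preimage _ (isOpen_discrete _)
  have hcover : (Set.univ : Set (G → A)) ⊆
      ⋃ x : G → A, {y : G → A | ∀ g ∈ I x, y g = x g} :=
    fun x _ => Set.mem_iUnion.mpr ⟨x, fun g _ => rfl⟩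
  obtain ⟨t, ht⟩ := isCompact_univ.elim_finite_subcover _ hopenC hcover
  set M : Finset G := t.biUnion I with hM
  have hlocal1 : ∀ u v : G → A, (∀ m ∈ M, u m = v m) → τ u 1 = τ v 1 := by
    intro u v huv
    obtain ⟨z, hz, hu⟩ : ∃ z ∈ t, ∀ g ∈ I z, u g = z g := by
      have := ht (Set.mem_univ u)
      simpa using this
    have hv : ∀ g ∈ I z, v g = z g := fun g hg => by
      rw [← huv g (Finset.mem_biUnion.mpr ⟨z, hz, hg⟩)]; exact hu g hg
    rw [hI z u hu, hI z v hv]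
  have hlocal : ∀ (g : G) (u v : G → A),
      (∀ m ∈ M, u (g * m) = v (g * m)) → τ u g = τ v g := by
    intro g u v huv
    have h1 : τ u g = τ (shift g⁻¹ u) 1 := by
      rw [hequi g⁻¹ u trivial]; simp [shift]
    have h2 : τ v g = τ (shift g⁻¹ v) 1 := by
      rw [hequi g⁻¹ v trivial]; simp [shift]
    rw [h1, h2]
    exact hlocal1 _ _ fun m hm => by simpa [shift] using huv m hm
  constructor
  · constructor
    · rw [← Set.image_univ]
      exact (isCompact_univ.image hcont').isClosed
    · rintro g _ ⟨x, rfl⟩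
      exact ⟨shift g x, hequi g x trivial⟩
  · refine ⟨(M ×ˢ M).image fun p : G × G => p.1 * p.2⁻¹, ?_⟩
    rintro Ω₁ Ω₂ hdisj y₁ ⟨x₁, rfl⟩ y₂ ⟨x₂, rfl⟩
    set S : Set G := {g | ∃ ω ∈ Ω₁, ∃ m ∈ M, g = ω * m} with hS
    set x : G → A := fun g => if g ∈ S then x₁ g else x₂ g with hxdef
    refine ⟨τ x, ⟨x, rfl⟩, ?_, ?_⟩
    · intro g hg
      apply hlocal
      intro m hm
      have hmem : g * m ∈ S := ⟨g, hg, m, hm, rfl⟩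
      simp [hxdef, hmem]
    · intro g hg
      apply hlocal
      intro m hm
      have hnmem : g * m ∉ S := by
        rintro ⟨ω, hω, m', hm', heq⟩
        have hd : g * (m * m'⁻¹) = ω := by
          rw [← mul_assoc, heq, mul_inv_cancel_right]
        have hmem2 : g ∈ plusNbhd (Ω₁ : Set G)
            (((M ×ˢ M).image fun p : G × G => p.1 * p.2⁻¹ : Finset G) : Set G)
            ∩ (Ω₂ : Set G) := by
          refine ⟨⟨m * m'⁻¹, ?_, ?_⟩, hg⟩
          · simp only [Finset.coe_image, Set.mem_image, Finset.mem_coe]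
            exact ⟨(m, m'), Finset.mem_product.mpr ⟨hm, hm'⟩, rfl⟩
          · rw [hd]; exact hω
        rw [hdisj] at hmem2
        exact hmem2
      simp [hxdef, hnmem]
end

section
/- Let G be an amenable group and let A be a finite set. Then every strongly irreducible subshift X ⊆ A^G is surjunctive: every injective cellular automaton τ : X → X is surjective. -/
open Pointwise Filter

variable {G : Type*} [Group G]

set_option linter.unusedSectionVars false
set_option maxHeartbeats 1000000
section MyAux







section AuxTop
variable {A : Type*}

theorem shift_shift (g h : G) (x : G → A) : shift g (shift h x) = shift (g * h) x := by
  funext k; simp [shift, mul_assoc]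

theorem shift_one' (x : G → A) : shift (1 : G) x = x := by funext k; simp [shift]

theorem cylinder_mem_nhds [TopologicalSpace A] [DiscreteTopology A] (x : G → A) {s : Set (G → A)}
    (hs : s ∈ nhds x) : ∃ W : Finset G, {y : G → A | ∀ w ∈ W, y w = x w} ⊆ s := by
  rw [nhds_pi, Filter.mem_pi] at hs
  obtain ⟨I, hI, t, ht, hsub⟩ := hs
  refine ⟨hI.toFinset, fun y hy => hsub fun i hi => ?_⟩
  have hyi : y i = x i := hy i (hI.mem_toFinset.2 hi)
  rw [hyi]
  exact mem_of_mem_nhds (ht i)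

theorem exists_memory_s14 [TopologicalSpace A] [DiscreteTopology A]
    {Z : Set (G → A)} (hZc : IsCompact Z) (hZi : ∀ g : G, ∀ z ∈ Z, shift g z ∈ Z)
    {φ : (G → A) → (G → A)} (hφc : ContinuousOn φ Z)
    (hφe : ∀ g : G, ∀ z ∈ Z, φ (shift g z) = shift g (φ z)) :
    ∃ M : Finset G, (1 : G) ∈ M ∧
      ∀ g : G, ∀ z ∈ Z, ∀ z' ∈ Z, (∀ m ∈ M, z (g * m) = z' (g * m)) → φ z g = φ z' g := by
  classical
  set f : (G → A) → A := fun z => φ z 1 with hf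
  have hfc : ContinuousOn f Z := (continuous_apply (1 : G)).comp_continuousOn hφc
  have key : ∀ z : G → A, ∃ W : Finset G,
      z ∈ Z → ∀ z' ∈ Z, (∀ w ∈ W, z' w = z w) → f z' = f z := by
    intro z
    by_cases hz : z ∈ Z
    · have h1 : f ⁻¹' {f z} ∈ nhdsWithin z Z := by
        refine (hfc z hz) ?_
        exact (isOpen_discrete _).mem_nhds rfl
      rw [mem_nhdsWithin] at h1
      obtain ⟨U, hUo, hzU, hUsub⟩ := h1
      obtain ⟨W, hW⟩ := cylinder_mem_nhds z (hUo.mem_nhds hzU)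
      exact ⟨W, fun _ z' hz' hagree => hUsub ⟨hW hagree, hz'⟩⟩
    · exact ⟨∅, fun h => absurd h hz⟩
  choose W hW using key
  set U : (G → A) → Set (G → A) := fun z => {y | ∀ w ∈ W z, y w = z w} with hU
  have hUopen : ∀ z, IsOpen (U z) := by
    intro z
    have : U z = ⋂ w ∈ W z, (fun y : G → A => y w) ⁻¹' {z w} := by
      ext y; simp [hU]
    rw [this]
    exact isOpen_biInter_finset fun w _ => (isOpen_discrete _).preimage (continuous_apply w)
  obtain ⟨t, htZ, hcover⟩ := hZc.elim_nhds_subcover U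
    (fun z _ => (hUopen z).mem_nhds (fun w _ => rfl))
  refine ⟨t.biUnion W ∪ {1}, by simp, ?_⟩
  have base : ∀ z ∈ Z, ∀ z' ∈ Z, (∀ m ∈ t.biUnion W ∪ ({1} : Finset G), z m = z' m) →
      f z = f z' := by
    intro z hz z' hz' hagree
    obtain ⟨z₀, hz₀t, hzU⟩ : ∃ z₀ ∈ t, z ∈ U z₀ := by
      have := hcover hz
      simpa using this
    have hz₀Z : z₀ ∈ Z := htZ z₀ hz₀t
    have h1 : f z = f z₀ := hW z₀ hz₀Z z hz hzU
    have h2 : f z' = f z₀ := by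
      refine hW z₀ hz₀Z z' hz' ?_
      intro w hw
      have hwM : w ∈ t.biUnion W ∪ ({1} : Finset G) :=
        Finset.mem_union_left _ (Finset.mem_biUnion.2 ⟨z₀, hz₀t, hw⟩)
      rw [← hagree w hwM]
      exact hzU w hw
    rw [h1, h2]
  intro g z hz z' hz' hagree
  have hs : shift g⁻¹ z ∈ Z := hZi g⁻¹ z hz
  have hs' : shift g⁻¹ z' ∈ Z := hZi g⁻¹ z' hz'
  have heq : f (shift g⁻¹ z) = f (shift g⁻¹ z') := by
    refine base _ hs _ hs' ?_
    intro m hm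
    show z (g⁻¹⁻¹ * m) = z' (g⁻¹⁻¹ * m)
    rw [inv_inv]
    exact hagree m hm
  have e1 : ∀ y ∈ Z, f (shift g⁻¹ y) = φ y g := by
    intro y hy
    show φ (shift g⁻¹ y) 1 = φ y g
    rw [hφe g⁻¹ y hy]
    show φ y (g⁻¹⁻¹ * 1) = φ y g
    rw [inv_inv, mul_one]
  rw [e1 z hz, e1 z' hz'] at heq
  exact heq

end AuxTop




section Count

theorem pow_le_choose' (k n s : ℕ) (h : k * s ≤ n) : k ^ s ≤ n.choose s := by
  induction s generalizing n with
  | zero => simp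
  | succ s ih =>
    rcases Nat.eq_zero_or_pos k with hk | hk
    · subst hk; simp
    · obtain ⟨m, rfl⟩ : ∃ m, n = m + 1 := by
        refine ⟨n - 1, ?_⟩
        have : 1 ≤ n := le_trans (by nlinarith) h
        omega
      have hks' : k * s + k ≤ m + 1 := by
        calc k * s + k = k * (s + 1) := by ring
          _ ≤ m + 1 := h
      have h1 : k * s ≤ m := by omega
      have IH := ih m h1
      have id1 : (m + 1) * m.choose s = (m + 1).choose (s + 1) * (s + 1) :=
        Nat.add_one_mul_choose_eq m s
      have h2 : k ^ (s + 1) * (s + 1) ≤ (m + 1).choose (s + 1) * (s + 1) := by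
        calc k ^ (s + 1) * (s + 1) = (k * (s + 1)) * k ^ s := by ring
          _ ≤ (m + 1) * m.choose s := Nat.mul_le_mul h IH
          _ = (m + 1).choose (s + 1) * (s + 1) := id1
      exact Nat.le_of_mul_le_mul_right h2 (Nat.succ_pos s)

theorem ncard_le_card_fintype {α β : Type*} [Fintype β] (s : Set α) (f : α → β)
    (hinj : Set.InjOn f s) : s.ncard ≤ Fintype.card β := by
  have hfin : s.Finite := Set.Finite.of_finite_image (Set.toFinite _) hinj
  calc s.ncard = (f '' s).ncard := (Set.ncard_image_of_injOn hinj).symm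
    _ ≤ (Set.univ : Set β).ncard := Set.ncard_le_ncard (Set.subset_univ _) Set.finite_univ
    _ = Fintype.card β := by rw [Set.ncard_univ, Nat.card_eq_fintype_card]

theorem ncard_le_mul_of_fibers {α β : Type*} {s : Set α} (hs : s.Finite) (f : α → β) (k : ℕ)
    (h : ∀ b, {a | a ∈ s ∧ f a = b}.ncard ≤ k) : s.ncard ≤ k * (f '' s).ncard := by
  classical
  have h1 := Finset.card_le_mul_card_image hs.toFinset k (f := f) ?_
  · have e1 : hs.toFinset.card = s.ncard := (Set.ncard_eq_toFinset_card s hs).symm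
    have e2 : ((hs.toFinset.image f).card : ℕ) = (f '' s).ncard := by
      have : ↑(hs.toFinset.image f) = f '' s := by
        rw [Finset.coe_image, hs.coe_toFinset]
      rw [← Set.ncard_coe_finset, this]
    rw [e1, e2] at h1
    exact h1
  · intro b _
    have e3 : ↑(hs.toFinset.filter (fun a => f a = b)) = {a | a ∈ s ∧ f a = b} := by
      ext a; simp [Set.mem_setOf_eq]
    calc (hs.toFinset.filter (fun a => f a = b)).card
        = {a | a ∈ s ∧ f a = b}.ncard := by rw [← Set.ncard_coe_finset, e3]
      _ ≤ k := h b

variable [DecidableEq G] {A : Type*} [Inhabited A]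

def res (Ω : Finset G) (x : G → A) : G → A := fun g => if g ∈ Ω then x g else default

theorem res_apply_mem {Ω : Finset G} {x : G → A} {g : G} (h : g ∈ Ω) : res Ω x g = x g :=
  if_pos h

theorem res_apply_not_mem {Ω : Finset G} {x : G → A} {g : G} (h : g ∉ Ω) : res Ω x g = default :=
  if_neg h

theorem res_eq_res {Ω : Finset G} {x y : G → A} (h : ∀ g ∈ Ω, x g = y g) : res Ω x = res Ω y := by
  funext g
  by_cases hg : g ∈ Ω
  · rw [res_apply_mem hg, res_apply_mem hg]; exact h g hg
  · rw [res_apply_not_mem hg, res_apply_not_mem hg]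

def patt (Z : Set (G → A)) (Ω : Finset G) : Set (G → A) := res Ω '' Z

theorem patt_injOn_restrict {Z : Set (G → A)} {Ω : Finset G} :
    Set.InjOn (fun f : G → A => (fun w : Ω => f w)) (patt Z Ω) := by
  rintro f ⟨x, _, rfl⟩ f' ⟨x', _, rfl⟩ hee
  funext g
  by_cases hg : g ∈ Ω
  · exact congrFun hee ⟨g, hg⟩
  · rw [res_apply_not_mem hg, res_apply_not_mem hg]

theorem patt_finite [Fintype A] (Z : Set (G → A)) (Ω : Finset G) : (patt Z Ω).Finite :=
  Set.Finite.of_finite_image (Set.toFinite _) patt_injOn_restrict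

theorem patt_ncard_pos [Fintype A] {Z : Set (G → A)} (hZ : Z.Nonempty) (Ω : Finset G) :
    1 ≤ (patt Z Ω).ncard := by
  obtain ⟨z, hz⟩ := hZ
  have hne : (patt Z Ω).Nonempty := ⟨res Ω z, ⟨z, hz, rfl⟩⟩
  have := (Set.ncard_pos (patt_finite Z Ω)).2 hne
  omega

theorem patt_mono [Fintype A] {Z Z' : Set (G → A)} (h : Z ⊆ Z') (Ω : Finset G) :
    patt Z Ω ⊆ patt Z' Ω := Set.image_mono h

theorem res_res {Ω Ω' : Finset G} (h : Ω ⊆ Ω') (x : G → A) : res Ω (res Ω' x) = res Ω x := by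
  funext g
  by_cases hg : g ∈ Ω
  · rw [res_apply_mem hg, res_apply_mem (h hg), res_apply_mem hg]
  · rw [res_apply_not_mem hg, res_apply_not_mem hg]

theorem patt_ncard_le_mul [Fintype A] (Z : Set (G → A)) {Ω Ω' : Finset G} (h : Ω ⊆ Ω') :
    (patt Z Ω').ncard ≤ Fintype.card A ^ ((Ω' \ Ω).card) * (patt Z Ω).ncard := by
  have hfib : ∀ b, {q | q ∈ patt Z Ω' ∧ res Ω q = b}.ncard
      ≤ Fintype.card A ^ ((Ω' \ Ω).card) := by
    intro b
    have hb := ncard_le_card_fintype {q | q ∈ patt Z Ω' ∧ res Ω q = b}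
      (fun q => (fun w : (Ω' \ Ω : Finset G) => q w)) ?_
    · calc {q | q ∈ patt Z Ω' ∧ res Ω q = b}.ncard
          ≤ Fintype.card ((Ω' \ Ω : Finset G) → A) := hb
        _ = Fintype.card A ^ ((Ω' \ Ω).card) := by rw [Fintype.card_fun, Fintype.card_coe]
    · rintro q ⟨⟨x, hx, rfl⟩, hq⟩ q' ⟨⟨x', hx', rfl⟩, hq'⟩ hee
      funext g
      by_cases hg : g ∈ Ω'
      · by_cases hgΩ : g ∈ Ω
        · have h5 := congrFun (hq.trans hq'.symm) g
          rw [res_apply_mem hgΩ, res_apply_mem hgΩ] at h5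
          rw [res_apply_mem hg, res_apply_mem hg]
          rwa [res_apply_mem hg, res_apply_mem hg] at h5
        · exact congrFun hee ⟨g, Finset.mem_sdiff.2 ⟨hg, hgΩ⟩⟩
      · rw [res_apply_not_mem hg, res_apply_not_mem hg]
  have himg : res Ω '' (patt Z Ω') = patt Z Ω := by
    unfold patt
    rw [← Set.image_comp]
    exact Set.image_congr fun x _ => res_res h x
  have hm := ncard_le_mul_of_fibers (patt_finite Z Ω') (res Ω)
    (Fintype.card A ^ ((Ω' \ Ω).card)) hfib
  rwa [himg] at hm

end Count







theorem plusNbhd_coe_inv [DecidableEq G] (Fb C : Finset G) :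
    plusNbhd (Fb : Set G) ((C⁻¹ : Finset G) : Set G) = ((Fb * C : Finset G) : Set G) := by
  ext g
  simp only [plusNbhd, Set.mem_setOf_eq, Finset.mem_coe]
  constructor
  · rintro ⟨d, hd, hgd⟩
    obtain ⟨v, hv, rfl⟩ := Finset.mem_inv.1 hd
    have := Finset.mul_mem_mul hgd hv
    simpa using this
  · intro hg
    obtain ⟨u, hu, v, hv, rfl⟩ := Finset.mem_mul.1 hg
    exact ⟨v⁻¹, Finset.inv_mem_inv hv, by simpa using hu⟩

theorem glue_exists [DecidableEq G] {A : Type*} [Inhabited A] {X : Set (G → A)} {Δ₀ : Finset G}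
    (hΔ : DeltaIrreducible Δ₀ X) (hXinv : ∀ g : G, ∀ x ∈ X, shift g x ∈ X)
    {z₀ : G → A} (hz₀ : z₀ ∈ X) (E Estar : Finset G) (hEsub : E ⊆ Estar)
    (hED : ∀ e ∈ E, ∀ d ∈ Δ₀, e * d ∈ Estar)
    (Fb : Finset G) (S : Finset G)
    (hdisj : ∀ s ∈ S, ∀ t ∈ S, s ≠ t → Disjoint (Estar.image (s * ·)) (Estar.image (t * ·)))
    {y : G → A} (hy : y ∈ X) :
    ∃ x ∈ X, (∀ g ∈ Fb, g ∉ S.biUnion (fun t => Estar.image (t * ·)) → x g = y g) ∧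
      (∀ t ∈ S, ∀ e ∈ E, x (t * e) = z₀ e) := by
  classical
  revert hdisj
  induction S using Finset.induction_on with
  | empty => exact fun _ => ⟨y, hy, fun g _ _ => rfl, by simp⟩
  | @insert t S htS ih =>
    intro hdisj
    have hdisjS : ∀ s ∈ S, ∀ t' ∈ S, s ≠ t' →
        Disjoint (Estar.image (s * ·)) (Estar.image (t' * ·)) :=
      fun s hs t' ht' => hdisj s (Finset.mem_insert_of_mem hs) t' (Finset.mem_insert_of_mem ht')
    obtain ⟨x', hx'X, hx'1, hx'2⟩ := ih hdisjS
    set U := (insert t S).biUnion (fun t' => Estar.image (t' * ·)) with hU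
    set Ω₁ : Finset G := (Fb \ U) ∪ S.biUnion (fun t' => E.image (t' * ·)) with hΩ₁
    set Ω₂ : Finset G := E.image (t * ·) with hΩ₂
    have hsep : plusNbhd (Ω₁ : Set G) (Δ₀ : Set G) ∩ (Ω₂ : Set G) = ∅ := by
      ext g
      simp only [Set.mem_inter_iff, Set.mem_empty_iff_false, iff_false, not_and]
      rintro ⟨d, hd, hgd⟩ hg2
      have hg2' : g ∈ Ω₂ := hg2
      obtain ⟨e, he, rfl⟩ := Finset.mem_image.1 hg2'
      have hd' : d ∈ Δ₀ := hd
      have hmem : t * e * d ∈ Estar.image (t * ·) :=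
        Finset.mem_image.2 ⟨e * d, hED e he d hd', (mul_assoc t e d).symm⟩
      have hgd' : t * e * d ∈ Ω₁ := hgd
      rcases Finset.mem_union.1 hgd' with h1 | h1
      · exact (Finset.mem_sdiff.1 h1).2
          (Finset.mem_biUnion.2 ⟨t, Finset.mem_insert_self t S, hmem⟩)
      · obtain ⟨s, hsS, hse⟩ := Finset.mem_biUnion.1 h1
        obtain ⟨e', he', hse'⟩ := Finset.mem_image.1 hse
        have hne : s ≠ t := fun h => htS (h ▸ hsS)
        have hmem2 : t * e * d ∈ Estar.image (s * ·) :=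
          Finset.mem_image.2 ⟨e', hEsub he', hse'⟩
        exact Finset.disjoint_left.1
          (hdisj s (Finset.mem_insert_of_mem hsS) t (Finset.mem_insert_self t S) hne) hmem2 hmem
    obtain ⟨x, hxX, h1, h2⟩ := hΔ Ω₁ Ω₂ hsep x' hx'X (shift t z₀) (hXinv t z₀ hz₀)
    refine ⟨x, hxX, ?_, ?_⟩
    · intro g hgF hgU
      have hgUS : g ∉ S.biUnion (fun t' => Estar.image (t' * ·)) := by
        intro h
        obtain ⟨s, hs, hm⟩ := Finset.mem_biUnion.1 h
        exact hgU (Finset.mem_biUnion.2 ⟨s, Finset.mem_insert_of_mem hs, hm⟩)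
      have hgΩ₁ : g ∈ Ω₁ := Finset.mem_union_left _ (Finset.mem_sdiff.2 ⟨hgF, hgU⟩)
      rw [h1 g hgΩ₁]
      exact hx'1 g hgF hgUS
    · intro s hs e he
      rcases Finset.mem_insert.1 hs with rfl | hsS
      · have hmem : s * e ∈ Ω₂ := Finset.mem_image.2 ⟨e, he, rfl⟩
        rw [h2 _ hmem]
        show z₀ (s⁻¹ * (s * e)) = z₀ e
        rw [inv_mul_cancel_left]
      · have hmem : s * e ∈ Ω₁ := Finset.mem_union_right _
          (Finset.mem_biUnion.2 ⟨s, hsS, Finset.mem_image.2 ⟨e, he, rfl⟩⟩)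
        rw [h1 _ hmem]
        exact hx'2 s hsS e he

end MyAux

/-- Every strongly irreducible subshift over an amenable group is surjunctive. -/
theorem stronglyIrreducible_surjunctive {A : Type*} [Fintype A]
    [TopologicalSpace A] [DiscreteTopology A]
    {J : Type*} [Nonempty J] [Preorder J] [IsDirected J (· ≤ ·)]
    (F : J → Finset G) (hF : IsFolnerNet F)
    (X : Set (G → A)) (hX : IsSubshift X) (hSI : StronglyIrreducible X)
    (τ : (G → A) → (G → A)) (hτ : IsCellularAutomaton X X τ)
    (hinj : Set.InjOn τ X) :
    Set.SurjOn τ X X := by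
  classical
  rcases finite_or_infinite G with hGfin | hGinf
  · have hfin : X.Finite := Set.toFinite X
    exact ((hfin.injOn_iff_bijOn_of_mapsTo hτ.1).1 hinj).surjOn
  rcases subsingleton_or_nontrivial A with hA | hA
  · intro z hz
    exact ⟨z, hz, Subsingleton.elim _ _⟩
  letI : Inhabited A := Classical.inhabited_of_nonempty inferInstance
  intro z₀ hz₀X
  by_contra hz₀Y
  set Y : Set (G → A) := τ '' X with hYdef
  have hXcl : IsClosed X := hX.1
  have hXinv := hX.2
  have hXcomp : IsCompact X := hXcl.isCompact
  have hXne : X.Nonempty := ⟨z₀, hz₀X⟩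
  have hYsubX : Y ⊆ X := hτ.1.image_subset
  have hYcomp : IsCompact Y := hXcomp.image_of_continuousOn hτ.2.1
  have hYcl : IsClosed Y := hYcomp.isClosed
  have hYne : Y.Nonempty := hXne.image τ
  have hYinv : ∀ g : G, ∀ y ∈ Y, shift g y ∈ Y := by
    rintro g y ⟨x, hx, rfl⟩
    exact ⟨shift g x, hXinv g x hx, (hτ.2.2 g x hx)⟩
  -- construction of the inverse map σ
  haveI hXcs : CompactSpace ↥X := isCompact_iff_compactSpace.mp hXcomp
  have hYmaps : Set.MapsTo τ X Y := fun x hx => ⟨x, hx, rfl⟩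
  set f : ↥X → ↥Y := Set.MapsTo.restrict τ X Y hYmaps with hfdef
  have hfc : Continuous f := hτ.2.1.mapsToRestrict hYmaps
  have hfbij : Function.Bijective f := by
    constructor
    · intro p q hpq
      exact Subtype.ext (hinj p.2 q.2 (congrArg Subtype.val hpq))
    · rintro ⟨y, hy⟩
      obtain ⟨x, hx, rfl⟩ := hy
      exact ⟨⟨x, hx⟩, Subtype.ext rfl⟩
  set e : ↥X ≃ ↥Y := Equiv.ofBijective f hfbij with hedef
  have hec : Continuous ⇑e := hfc
  set hom : ↥X ≃ₜ ↥Y := hec.homeoOfEquivCompactToT2 with homdef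
  set σ : (G → A) → (G → A) :=
    fun y => if h : y ∈ Y then ((hom.symm ⟨y, h⟩ : ↥X) : G → A) else y with hσdef
  have hσval : ∀ (y) (h : y ∈ Y), σ y = ((hom.symm ⟨y, h⟩ : ↥X) : G → A) := fun y h => dif_pos h
  have homsymm : ∀ p : ↥Y, hom.symm p = e.symm p := fun p => rfl
  have hσX : ∀ y ∈ Y, σ y ∈ X := by
    intro y h; rw [hσval y h]; exact (hom.symm ⟨y, h⟩).2
  have hστ : ∀ x ∈ X, σ (τ x) = x := by
    intro x hx
    have h : τ x ∈ Y := ⟨x, hx, rfl⟩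
    rw [hσval _ h]
    have h2 : (⟨τ x, h⟩ : ↥Y) = e ⟨x, hx⟩ := Subtype.ext rfl
    rw [homsymm, h2, Equiv.symm_apply_apply]
  have hτσ : ∀ y ∈ Y, τ (σ y) = y := by
    intro y h
    rw [hσval y h, homsymm]
    have h3 : τ ((e.symm ⟨y, h⟩ : ↥X) : G → A) = ((f (e.symm ⟨y, h⟩) : ↥Y) : G → A) := rfl
    rw [h3]
    have h4 : f (e.symm ⟨y, h⟩) = e (e.symm ⟨y, h⟩) := rfl
    rw [h4, Equiv.apply_symm_apply]
  have hσcont : ContinuousOn σ Y := by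
    rw [continuousOn_iff_continuous_restrict]
    have h5 : Y.domRestrict σ = fun p : ↥Y => ((hom.symm p : ↥X) : G → A) := by
      funext p
      show σ p.1 = _
      rw [hσval p.1 p.2]
    rw [h5]
    exact continuous_subtype_val.comp hom.symm.continuous
  have hσequi : ∀ g : G, ∀ y ∈ Y, σ (shift g y) = shift g (σ y) := by
    intro g y hy
    have hx : σ y ∈ X := hσX y hy
    have h1 : shift g y = τ (shift g (σ y)) := by
      rw [hτ.2.2 g (σ y) hx, hτσ y hy]
    rw [h1, hστ _ (hXinv g (σ y) hx)]
  obtain ⟨M, h1M, hMmem⟩ := exists_memory_s14 hYcomp hYinv hσcont hσequi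
  -- the missing pattern
  obtain ⟨W, hW⟩ := cylinder_mem_nhds z₀ (hYcl.isOpen_compl.mem_nhds hz₀Y)
  set E : Finset G := insert 1 W with hEdef
  have hmiss : ∀ y ∈ Y, ∃ ee ∈ E, y ee ≠ z₀ ee := by
    intro y hy
    by_contra hc
    push_neg at hc
    exact (hW fun w hw => hc w (Finset.mem_insert_of_mem hw)) hy
  obtain ⟨Δ₀, hΔ₀⟩ := hSI
  set Estar : Finset G := E * (insert 1 Δ₀) with hEstardef
  have hEsub : E ⊆ Estar := by
    intro ee he
    have := Finset.mul_mem_mul he (Finset.mem_insert_self 1 Δ₀)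
    simpa using this
  have h1Estar : (1 : G) ∈ Estar := hEsub (Finset.mem_insert_self 1 W)
  have hED : ∀ ee ∈ E, ∀ d ∈ Δ₀, ee * d ∈ Estar :=
    fun ee he d hd => Finset.mul_mem_mul he (Finset.mem_insert_of_mem hd)
  -- constants
  set a := Fintype.card A with hadef
  have ha2 : 2 ≤ a := Fintype.one_lt_card
  set m := a ^ Estar.card with hmdef
  have hm1 : 1 ≤ m := Nat.one_le_pow _ _ (by omega)
  set K := (Estar * Estar⁻¹).card with hKdef
  have h1EE : (1 : G) ∈ Estar * Estar⁻¹ := by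
    have := Finset.mul_mem_mul h1Estar (Finset.inv_mem_inv h1Estar)
    simpa using this
  have hK1 : 1 ≤ K := Finset.card_pos.2 ⟨1, h1EE⟩
  set c₂ := Estar.card with hc₂def
  set c₁ := 2 * m * K * a with hc₁def
  -- Følner eventualities
  haveI : (atTop : Filter J).NeBot := Filter.atTop_neBot_iff.2 ⟨inferInstance, inferInstance⟩
  have hb_t : Tendsto (fun j => ((((F j * M) \ F j).card : ℝ)) / ((F j).card : ℝ))
      atTop (nhds 0) := by
    refine Filter.Tendsto.congr ?_ (hF.2 M⁻¹)
    intro j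
    rw [plusNbhd_coe_inv, ← Finset.coe_sdiff, Set.ncard_coe_finset]
  have hd_t : Tendsto (fun j => ((((F j * Estar) \ F j).card : ℝ)) / ((F j).card : ℝ))
      atTop (nhds 0) := by
    refine Filter.Tendsto.congr ?_ (hF.2 Estar⁻¹)
    intro j
    rw [plusNbhd_coe_inv, ← Finset.coe_sdiff, Set.ncard_coe_finset]
  have hlarge : ∀ N : ℕ, ∀ᶠ j in atTop, (N : ℝ) < ((F j).card : ℝ) := by
    intro N
    obtain ⟨C, hC⟩ := Infinite.exists_subset_card_eq G (2 * N + 2)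
    have h0 := (hF.2 C).eventually_lt_const (show (0 : ℝ) < 1 by norm_num)
    filter_upwards [h0] with j hj
    have hFjpos : 0 < (F j).card := Finset.card_pos.2 (hF.1 j)
    obtain ⟨f₀, hf₀⟩ := hF.1 j
    have hPfin : (plusNbhd (↑(F j)) (↑C) \ (↑(F j) : Set G)).Finite := by
      apply Set.Finite.subset (F j * C⁻¹).finite_toSet
      rintro g ⟨⟨dcc, hdcc, hgd⟩, -⟩
      have h6 : g * dcc * dcc⁻¹ ∈ F j * C⁻¹ :=
        Finset.mul_mem_mul hgd (Finset.inv_mem_inv hdcc)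
      rw [mul_inv_cancel_right] at h6
      exact Finset.mem_coe.2 h6
    have hinj0 : Function.Injective (fun d : G => f₀ * d⁻¹) := by
      intro d₁ d₂ h
      simpa using h
    have hsub : ((C.image (fun d => f₀ * d⁻¹) : Finset G) : Set G)
        ⊆ (plusNbhd (↑(F j)) (↑C) \ (↑(F j) : Set G)) ∪ ↑(F j) := by
      intro g hg
      obtain ⟨dd, hdd, rfl⟩ := Finset.mem_image.1 (Finset.mem_coe.1 hg)
      have hmem : (f₀ * dd⁻¹) ∈ plusNbhd (↑(F j)) (↑C) :=
        ⟨dd, Finset.mem_coe.2 hdd, by simpa using hf₀⟩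
      by_cases hgF : f₀ * dd⁻¹ ∈ (↑(F j) : Set G)
      · exact Or.inr hgF
      · exact Or.inl ⟨hmem, hgF⟩
    have hcard1 : 2 * N + 2 ≤ (plusNbhd (↑(F j)) (↑C) \ (↑(F j) : Set G)).ncard + (F j).card := by
      have h7 : ((C.image (fun d => f₀ * d⁻¹) : Finset G) : Set G).ncard = 2 * N + 2 := by
        rw [Set.ncard_coe_finset, Finset.card_image_of_injective _ hinj0, hC]
      calc 2 * N + 2 = ((C.image (fun d => f₀ * d⁻¹) : Finset G) : Set G).ncard := h7.symm
        _ ≤ ((plusNbhd (↑(F j)) (↑C) \ (↑(F j) : Set G)) ∪ ↑(F j)).ncard :=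
            Set.ncard_le_ncard hsub (hPfin.union (F j).finite_toSet)
        _ ≤ (plusNbhd (↑(F j)) (↑C) \ (↑(F j) : Set G)).ncard + (↑(F j) : Set G).ncard :=
            Set.ncard_union_le _ _
        _ = (plusNbhd (↑(F j)) (↑C) \ (↑(F j) : Set G)).ncard + (F j).card := by
            rw [Set.ncard_coe_finset]
    have hlt : (plusNbhd (↑(F j)) (↑C) \ (↑(F j) : Set G)).ncard < (F j).card := by
      have h8 := (div_lt_one (show (0:ℝ) < ((F j).card : ℝ) by exact_mod_cast hFjpos)).1 hj
      exact_mod_cast h8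
    have : N + 1 ≤ (F j).card := by omega
    exact_mod_cast Nat.lt_of_lt_of_le (Nat.lt_succ_self N) this
  -- pick a good index j
  have hc₁pos : (0:ℝ) < 4 * ((c₁ : ℝ) + 1) := by positivity
  have hc₂pos : (0:ℝ) < 4 * ((c₂ : ℝ) + 1) := by positivity
  have hev := ((hb_t.eventually_lt_const (show (0:ℝ) < 1 / (4 * ((c₁:ℝ) + 1)) from one_div_pos.2 hc₁pos)).and
    ((hd_t.eventually_lt_const (show (0:ℝ) < 1 / (4 * ((c₂:ℝ) + 1)) from one_div_pos.2 hc₂pos)).and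
      (hlarge (8 * m * K)))).exists
  obtain ⟨j, hbj, hdj, hNj⟩ := hev
  set Fj := F j with hFjdef
  set FM := Fj * M with hFMdef
  set bb := (FM \ Fj).card with hbbdef
  set dd := ((Fj * Estar) \ Fj).card with hdddef
  have hFjpos : 0 < Fj.card := Finset.card_pos.2 (hF.1 j)
  -- tiling
  set tileS : G → Finset G := fun t => Estar.image (t * ·) with htileSdef
  set F₀ := Fj.filter (fun g => tileS g ⊆ Fj) with hF₀def
  set P : Finset G → Prop :=
    (fun T => ∀ s ∈ T, ∀ t ∈ T, s ≠ t → Disjoint (tileS s) (tileS t)) with hPdef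
  obtain ⟨T₁, hT₁mem, hT₁max⟩ := Finset.exists_max_image F₀.powerset
    (fun T => if P T then T.card else 0) ⟨∅, Finset.mem_powerset.2 (Finset.empty_subset _)⟩
  have hPempty : P (∅ : Finset G) := by intro s hs; exact absurd hs (Finset.notMem_empty s)
  set T := if P T₁ then T₁ else ∅ with hTdef
  have hT₀ : T ⊆ F₀ := by
    rw [hTdef]
    split_ifs
    · exact Finset.mem_powerset.1 hT₁mem
    · exact Finset.empty_subset _
  have hTdisj : ∀ s ∈ T, ∀ t ∈ T, s ≠ t → Disjoint (tileS s) (tileS t) := by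
    rw [hTdef]
    split_ifs with hPT₁
    · exact hPT₁
    · exact hPempty
  have hTmax : ∀ T' ∈ F₀.powerset, P T' → T'.card ≤ T.card := by
    intro T' hT' hPT'
    have h1 := hT₁max T' hT'
    rw [if_pos hPT'] at h1
    rw [hTdef]
    split_ifs with hPT₁
    · rw [if_pos hPT₁] at h1
      exact h1
    · rw [if_neg hPT₁] at h1
      omega
  set n := T.card with hndef
  have hcover : F₀ ⊆ T.biUnion (fun t => (Estar * Estar⁻¹).image (t * ·)) := by
    intro g hg
    by_contra hng
    have hgT : g ∉ T := by
      intro hgT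
      exact hng (Finset.mem_biUnion.2 ⟨g, hgT, Finset.mem_image.2 ⟨1, h1EE, mul_one g⟩⟩)
    have hdisjg : ∀ t ∈ T, Disjoint (tileS g) (tileS t) := by
      intro t ht
      rw [Finset.disjoint_left]
      intro u hug hut
      apply hng
      obtain ⟨e₁, he₁, rfl⟩ := Finset.mem_image.1 hug
      obtain ⟨e₂, he₂, he⟩ := Finset.mem_image.1 hut
      refine Finset.mem_biUnion.2 ⟨t, ht, Finset.mem_image.2
        ⟨e₂ * e₁⁻¹, Finset.mul_mem_mul he₂ (Finset.inv_mem_inv he₁), ?_⟩⟩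
      rw [← mul_assoc, he, mul_inv_cancel_right]
    have hins : P (insert g T) := by
      intro s hs t ht hst
      rcases Finset.mem_insert.1 hs with rfl | hsT
      · rcases Finset.mem_insert.1 ht with rfl | htT
        · exact absurd rfl hst
        · exact hdisjg t htT
      · rcases Finset.mem_insert.1 ht with rfl | htT
        · exact (hdisjg s hsT).symm
        · exact hTdisj s hsT t htT hst
    have h9 := hTmax (insert g T) (Finset.mem_powerset.2 (Finset.insert_subset hg hT₀)) hins
    rw [Finset.card_insert_of_notMem hgT] at h9
    omega
  have hF₀card : F₀.card ≤ n * K := by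
    calc F₀.card ≤ (T.biUnion (fun t => (Estar * Estar⁻¹).image (t * ·))).card :=
        Finset.card_le_card hcover
      _ ≤ ∑ t ∈ T, ((Estar * Estar⁻¹).image (t * ·)).card := Finset.card_biUnion_le
      _ ≤ ∑ _t ∈ T, K := Finset.sum_le_sum fun t _ => Finset.card_image_le
      _ = n * K := by rw [Finset.sum_const, smul_eq_mul]
  have hFsplit : Fj.card ≤ n * K + dd * c₂ := by
    have h1 : Fj \ F₀ ⊆ ((Fj * Estar) \ Fj) * Estar⁻¹ := by
      intro g hg
      obtain ⟨hgF, hgn⟩ := Finset.mem_sdiff.1 hg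
      have h2 : ¬ (tileS g ⊆ Fj) := by
        intro hsub; exact hgn (Finset.mem_filter.2 ⟨hgF, hsub⟩)
      obtain ⟨u, hu, hun⟩ := Finset.not_subset.1 h2
      obtain ⟨ee, hee, rfl⟩ := Finset.mem_image.1 hu
      have h3 : g * ee ∈ (Fj * Estar) \ Fj :=
        Finset.mem_sdiff.2 ⟨Finset.mul_mem_mul hgF hee, hun⟩
      have h4 : g = (g * ee) * ee⁻¹ := by rw [mul_inv_cancel_right]
      rw [h4]
      exact Finset.mul_mem_mul h3 (Finset.inv_mem_inv hee)
    have h3 : (Fj \ F₀).card ≤ dd * c₂ := by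
      calc (Fj \ F₀).card ≤ (((Fj * Estar) \ Fj) * Estar⁻¹).card := Finset.card_le_card h1
        _ ≤ dd * Estar⁻¹.card := Finset.card_mul_le
        _ = dd * c₂ := by rw [Finset.card_inv]
    have h4 : (Fj \ F₀).card + F₀.card = Fj.card :=
      Finset.card_sdiff_add_card_eq_card (Finset.filter_subset _ _)
    omega
  -- pattern counting
  set s := n / (2 * m) with hsdef
  set NY := (patt Y Fj).ncard with hNYdef
  set NX := (patt X Fj).ncard with hNXdef
  have hstep1 : NX ≤ (patt Y FM).ncard := by
    set ψ : (G → A) → (G → A) :=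
      fun q => if h : ∃ y ∈ Y, res FM y = q then res Fj (σ h.choose) else q with hψ
    have hsub : patt X Fj ⊆ ψ '' patt Y FM := by
      rintro _ ⟨x, hxX, rfl⟩
      have hτxY : τ x ∈ Y := ⟨x, hxX, rfl⟩
      refine ⟨res FM (τ x), ⟨τ x, hτxY, rfl⟩, ?_⟩
      have hex : ∃ y ∈ Y, res FM y = res FM (τ x) := ⟨τ x, hτxY, rfl⟩
      show (if h : ∃ y ∈ Y, res FM y = res FM (τ x) then res Fj (σ h.choose)
        else res FM (τ x)) = res Fj x
      rw [dif_pos hex]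
      obtain ⟨hyY, hyres⟩ := hex.choose_spec
      apply res_eq_res
      intro g hg
      have hagree : ∀ mm ∈ M, hex.choose (g * mm) = (τ x) (g * mm) := by
        intro mm hmm
        have h5 := congrFun hyres (g * mm)
        have hgm : g * mm ∈ FM := Finset.mul_mem_mul hg hmm
        rwa [res_apply_mem hgm, res_apply_mem hgm] at h5
      rw [hMmem g _ hyY _ hτxY hagree, hστ x hxX]
    calc NX ≤ (ψ '' patt Y FM).ncard := Set.ncard_le_ncard hsub ((patt_finite Y FM).image ψ)
      _ ≤ (patt Y FM).ncard := Set.ncard_image_le (patt_finite Y FM)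
  have hFjFM : Fj ⊆ FM := by
    intro g hg
    have := Finset.mul_mem_mul hg h1M
    simpa using this
  have hstep2 : (patt Y FM).ncard ≤ a ^ bb * NY := patt_ncard_le_mul Y hFjFM
  -- gluing map
  have hglue_all : ∀ q S, q ∈ patt Y Fj → S ⊆ T →
      ∃ x ∈ X, (∀ g ∈ Fj, g ∉ S.biUnion tileS → x g = q g) ∧
        (∀ t ∈ S, ∀ ee ∈ E, x (t * ee) = z₀ ee) := by
    intro q S hq hS
    obtain ⟨y, hyY, rfl⟩ := hq
    have hdisj : ∀ s' ∈ S, ∀ t ∈ S, s' ≠ t →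
        Disjoint (Estar.image (s' * ·)) (Estar.image (t * ·)) :=
      fun s' hs' t ht => hTdisj s' (hS hs') t (hS ht)
    obtain ⟨x, hxX, hx1, hx2⟩ :=
      glue_exists hΔ₀ hXinv hz₀X E Estar hEsub hED Fj S hdisj (hYsubX hyY)
    refine ⟨x, hxX, ?_, hx2⟩
    intro g hg hgU
    rw [hx1 g hg hgU, res_apply_mem hg]
  set Θ : (G → A) × Finset G → (G → A) := fun p =>
    if h : ∃ x ∈ X, (∀ g ∈ Fj, g ∉ p.2.biUnion tileS → x g = p.1 g) ∧
        (∀ t ∈ p.2, ∀ ee ∈ E, x (t * ee) = z₀ ee)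
    then res Fj h.choose else p.1 with hΘdef
  have hΘspec : ∀ q S, q ∈ patt Y Fj → S ⊆ T →
      ∃ x, x ∈ X ∧ Θ (q, S) = res Fj x ∧
        (∀ g ∈ Fj, g ∉ S.biUnion tileS → x g = q g) ∧
        (∀ t ∈ S, ∀ ee ∈ E, x (t * ee) = z₀ ee) := by
    intro q S hq hS
    have h := hglue_all q S hq hS
    obtain ⟨hx1, hx2, hx3⟩ := h.choose_spec
    refine ⟨h.choose, hx1, ?_, hx2, hx3⟩
    show (if h : ∃ x ∈ X, (∀ g ∈ Fj, g ∉ S.biUnion tileS → x g = q g) ∧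
        (∀ t ∈ S, ∀ ee ∈ E, x (t * ee) = z₀ ee)
      then res Fj h.choose else q) = res Fj h.choose
    rw [dif_pos h]
  have htileFj : ∀ t ∈ T, tileS t ⊆ Fj := fun t ht => (Finset.mem_filter.1 (hT₀ ht)).2
  have hteFj : ∀ t ∈ T, ∀ ee ∈ E, t * ee ∈ Fj :=
    fun t ht ee he => htileFj t ht (Finset.mem_image.2 ⟨ee, hEsub he, rfl⟩)
  have hSdet : ∀ q S, q ∈ patt Y Fj → S ⊆ T → ∀ t ∈ T,
      (t ∈ S ↔ ∀ ee ∈ E, Θ (q, S) (t * ee) = z₀ ee) := by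
    intro q S hq hS t ht
    obtain ⟨x, hxX, hΘeq, hAg, hTi⟩ := hΘspec q S hq hS
    constructor
    · intro htS ee he
      rw [hΘeq, res_apply_mem (hteFj t ht ee he)]
      exact hTi t htS ee he
    · intro hall
      by_contra htS
      obtain ⟨y, hyY, rfl⟩ := hq
      obtain ⟨ee, he, hne⟩ := hmiss (shift t⁻¹ y) (hYinv t⁻¹ y hyY)
      have hyte : y (t * ee) ≠ z₀ ee := by
        have h6 : shift t⁻¹ y ee = y (t * ee) := by simp [shift]
        rwa [h6] at hne
      have hnotin : t * ee ∉ S.biUnion tileS := by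
        intro hmem
        obtain ⟨s', hs'S, hs'⟩ := Finset.mem_biUnion.1 hmem
        have hnst : s' ≠ t := fun h => htS (h ▸ hs'S)
        exact Finset.disjoint_left.1 (hTdisj s' (hS hs'S) t ht hnst) hs'
          (Finset.mem_image.2 ⟨ee, hEsub he, rfl⟩)
      have h7 := hall ee he
      rw [hΘeq, res_apply_mem (hteFj t ht ee he)] at h7
      rw [hAg (t * ee) (hteFj t ht ee he) hnotin, res_apply_mem (hteFj t ht ee he)] at h7
      exact hyte h7
  set PD : Finset ((G → A) × Finset G) :=
    (patt_finite Y Fj).toFinset ×ˢ T.powersetCard s with hPDdef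
  have hPDmem : ∀ p : (G → A) × Finset G,
      p ∈ PD ↔ p.1 ∈ patt Y Fj ∧ (p.2 ⊆ T ∧ p.2.card = s) := by
    intro p
    rw [hPDdef, Finset.mem_product, Set.Finite.mem_toFinset, Finset.mem_powersetCard]
  have hPDcard : PD.card = NY * n.choose s := by
    rw [hPDdef, Finset.card_product, Finset.card_powersetCard]
    congr 1
    exact (Set.ncard_eq_toFinset_card _ _).symm
  have hfiber : ∀ b ∈ PD.image Θ, (PD.filter (fun p => Θ p = b)).card ≤ m ^ s := by
    intro b hb
    obtain ⟨p₀, hp₀PD, hp₀⟩ := Finset.mem_image.1 hb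
    obtain ⟨hp₀Y, hp₀T, hp₀card⟩ := (hPDmem p₀).1 hp₀PD
    set S₀ := p₀.2 with hS₀def
    set U₀ := S₀.biUnion tileS with hU₀def
    have hSeq : ∀ p ∈ PD.filter (fun p => Θ p = b), p.2 = S₀ := by
      intro p hp
      obtain ⟨hpPD, hpb⟩ := Finset.mem_filter.1 hp
      obtain ⟨hpY, hpT, hpcard⟩ := (hPDmem p).1 hpPD
      ext u
      by_cases huT : u ∈ T
      · rw [hSdet p.1 p.2 hpY hpT u huT, hSdet p₀.1 S₀ hp₀Y hp₀T u huT]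
        have hpb' : Θ (p.1, p.2) = b := hpb
        have hp₀' : Θ (p₀.1, S₀) = b := hp₀
        rw [hpb', hp₀']
      · constructor
        · intro h; exact absurd (hpT h) huT
        · intro h; exact absurd (hp₀T h) huT
    have hcardU₀ : U₀.card = s * Estar.card := by
      rw [hU₀def, Finset.card_biUnion
        (fun t₁ h₁ t₂ h₂ hne => hTdisj t₁ (hp₀T h₁) t₂ (hp₀T h₂) hne)]
      rw [Finset.sum_congr rfl
        (fun t _ => Finset.card_image_of_injective Estar (mul_right_injective t))]
      rw [Finset.sum_const, smul_eq_mul, hp₀card]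
    have hinj2 : Set.InjOn (fun p : (G → A) × Finset G => (fun w : ↥U₀ => p.1 w.1))
        ↑(PD.filter (fun p => Θ p = b)) := by
      intro p hp p' hp' hee
      have hpf := Finset.mem_coe.1 hp
      have hp'f := Finset.mem_coe.1 hp'
      obtain ⟨hpPD, hpb⟩ := Finset.mem_filter.1 hpf
      obtain ⟨hp'PD, hp'b⟩ := Finset.mem_filter.1 hp'f
      obtain ⟨hpY, hpT, _⟩ := (hPDmem p).1 hpPD
      obtain ⟨hp'Y, hp'T, _⟩ := (hPDmem p').1 hp'PD
      have hS : p.2 = S₀ := hSeq p hpf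
      have hS' : p'.2 = S₀ := hSeq p' hp'f
      obtain ⟨x, hxX, hΘeq, hAg, _⟩ := hΘspec p.1 p.2 hpY hpT
      obtain ⟨x', hx'X, hΘeq', hAg', _⟩ := hΘspec p'.1 p'.2 hp'Y hp'T
      have hbx : b = res Fj x := by
        rw [← hpb]; exact hΘeq
      have hbx' : b = res Fj x' := by
        rw [← hp'b]; exact hΘeq'
      have h1 : p.1 = p'.1 := by
        obtain ⟨y, hyY, hqy⟩ := hpY
        obtain ⟨y', hy'Y, hqy'⟩ := hp'Y
        funext g
        by_cases hgU : g ∈ U₀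
        · exact congrFun hee ⟨g, hgU⟩
        · by_cases hgF : g ∈ Fj
          · have e1 : x g = p.1 g := hAg g hgF (by rw [hS]; exact hgU)
            have e2 : x' g = p'.1 g := hAg' g hgF (by rw [hS']; exact hgU)
            have e3 : x g = x' g := by
              have h6 := congrFun (hbx.symm.trans hbx') g
              rwa [res_apply_mem hgF, res_apply_mem hgF] at h6
            rw [← e1, ← e2, e3]
          · rw [← hqy, ← hqy', res_apply_not_mem hgF, res_apply_not_mem hgF]
      exact Prod.ext h1 (hS.trans hS'.symm)
    have h10 := Finset.card_le_card_of_injOn (fun p : (G → A) × Finset G =>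
      (fun w : ↥U₀ => p.1 w.1)) (fun p _ => Finset.mem_univ _) hinj2
    calc (PD.filter (fun p => Θ p = b)).card
        ≤ (Finset.univ : Finset (↥U₀ → A)).card := h10
      _ = a ^ U₀.card := by rw [Finset.card_univ, Fintype.card_fun, Fintype.card_coe]
      _ = m ^ s := by rw [hcardU₀, hmdef, ← pow_mul, mul_comm Estar.card s]
  have himg : ∀ b ∈ PD.image Θ, b ∈ patt X Fj := by
    intro b hb
    obtain ⟨p, hpPD, hpb⟩ := Finset.mem_image.1 hb
    obtain ⟨hpY, hpT, _⟩ := (hPDmem p).1 hpPD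
    obtain ⟨x, hxX, hΘeq, _, _⟩ := hΘspec p.1 p.2 hpY hpT
    have hbx : b = res Fj x := by rw [← hpb]; exact hΘeq
    rw [hbx]
    exact ⟨x, hxX, rfl⟩
  have hstep3 : NY * n.choose s ≤ m ^ s * NX := by
    have h8 := Finset.card_le_mul_card_image PD (m ^ s) hfiber
    rw [hPDcard] at h8
    have h9 : (PD.image Θ).card ≤ NX := by
      rw [← Set.ncard_coe_finset]
      exact Set.ncard_le_ncard (fun b hb => himg b (Finset.mem_coe.1 hb)) (patt_finite X Fj)
    calc NY * n.choose s ≤ m ^ s * (PD.image Θ).card := h8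
      _ ≤ m ^ s * NX := Nat.mul_le_mul_left _ h9
  have hNY1 : 1 ≤ NY := patt_ncard_pos hYne Fj
  have hchoose : n.choose s ≤ m ^ s * a ^ bb := by
    have h10 : NY * n.choose s ≤ NY * (m ^ s * a ^ bb) := by
      calc NY * n.choose s ≤ m ^ s * NX := hstep3
        _ ≤ m ^ s * (patt Y FM).ncard := Nat.mul_le_mul_left _ hstep1
        _ ≤ m ^ s * (a ^ bb * NY) := Nat.mul_le_mul_left _ hstep2
        _ = NY * (m ^ s * a ^ bb) := by ring
    exact Nat.le_of_mul_le_mul_left h10 (by omega)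
  have hn_bound : n < 2 * m * (a * bb + 1) := by
    rcases Nat.eq_zero_or_pos s with hs0 | hspos
    · have h11 : n < 2 * m := by
        by_contra hge
        push_neg at hge
        have h12 : 1 ≤ n / (2 * m) := (Nat.one_le_div_iff (by omega)).2 hge
        rw [← hsdef] at h12
        omega
      have h12 : 2 * m ≤ 2 * m * (a * bb + 1) := Nat.le_mul_of_pos_right _ (by omega)
      omega
    · have h2m : 2 * m * s ≤ n := by
        rw [hsdef, mul_comm]
        exact Nat.div_mul_le_self n (2 * m)
      have hcl : (2 * m) ^ s ≤ n.choose s := pow_le_choose' (2 * m) n s h2m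
      have h11 : 2 ^ s * m ^ s ≤ m ^ s * a ^ bb := by
        calc 2 ^ s * m ^ s = (2 * m) ^ s := (mul_pow 2 m s).symm
          _ ≤ n.choose s := hcl
          _ ≤ m ^ s * a ^ bb := hchoose
      have h12 : 2 ^ s ≤ a ^ bb := by
        have h13 : 2 ^ s * m ^ s ≤ a ^ bb * m ^ s := by
          calc 2 ^ s * m ^ s ≤ m ^ s * a ^ bb := h11
            _ = a ^ bb * m ^ s := by ring
        exact Nat.le_of_mul_le_mul_right h13 (pow_pos (show 0 < m by omega) s)
      have h13 : a ^ bb ≤ 2 ^ (a * bb) := by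
        calc a ^ bb ≤ (2 ^ a) ^ bb := Nat.pow_le_pow_left (le_of_lt (Nat.lt_two_pow_self (n := a))) bb
          _ = 2 ^ (a * bb) := by rw [← pow_mul]
      have h14 : s ≤ a * bb := (Nat.pow_le_pow_iff_right (by norm_num)).1 (h12.trans h13)
      have h15 : n < (s + 1) * (2 * m) := by
        rw [← Nat.div_lt_iff_lt_mul (show 0 < 2 * m by omega), ← hsdef]
        omega
      calc n < (s + 1) * (2 * m) := h15
        _ ≤ (a * bb + 1) * (2 * m) := Nat.mul_le_mul_right _ (by omega)
        _ = 2 * m * (a * bb + 1) := by ring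
  have hfinal : Fj.card ≤ c₁ * bb + 2 * m * K + c₂ * dd := by
    calc Fj.card ≤ n * K + dd * c₂ := hFsplit
      _ ≤ (2 * m * (a * bb + 1)) * K + dd * c₂ :=
          Nat.add_le_add_right (Nat.mul_le_mul_right K (le_of_lt hn_bound)) _
      _ = c₁ * bb + 2 * m * K + c₂ * dd := by rw [hc₁def]; ring
  -- real-number contradiction
  have hfpos : (0:ℝ) < (Fj.card : ℝ) := by exact_mod_cast hFjpos
  have hreal : ((Fj.card : ℕ) : ℝ) ≤ (c₁ : ℝ) * bb + 2 * m * K + (c₂ : ℝ) * dd := by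
    exact_mod_cast hfinal
  rw [div_lt_iff₀ hfpos] at hbj hdj
  have hNj' : 8 * (m:ℝ) * K < (Fj.card : ℝ) := by
    have : ((8 * m * K : ℕ) : ℝ) < (Fj.card : ℝ) := hNj
    push_cast at this
    linarith
  have hbb0 : (0:ℝ) ≤ (bb : ℝ) := Nat.cast_nonneg _
  have hdd0 : (0:ℝ) ≤ (dd : ℝ) := Nat.cast_nonneg _
  have hc₁0 : (0:ℝ) ≤ (c₁ : ℝ) := Nat.cast_nonneg _
  have hc₂0 : (0:ℝ) ≤ (c₂ : ℝ) := Nat.cast_nonneg _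
  have hkey1 : (4 * ((c₁:ℝ) + 1)) * (1 / (4 * ((c₁:ℝ) + 1))) = 1 :=
    mul_one_div_cancel (ne_of_gt hc₁pos)
  have hkey2 : (4 * ((c₂:ℝ) + 1)) * (1 / (4 * ((c₂:ℝ) + 1))) = 1 :=
    mul_one_div_cancel (ne_of_gt hc₂pos)
  have hbj' : 4 * ((c₁:ℝ) + 1) * bb < (Fj.card : ℝ) := by
    have h20 := mul_lt_mul_of_pos_left hbj hc₁pos
    rw [← mul_assoc, hkey1, one_mul] at h20
    exact h20
  have hdj' : 4 * ((c₂:ℝ) + 1) * dd < (Fj.card : ℝ) := by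
    have h20 := mul_lt_mul_of_pos_left hdj hc₂pos
    rw [← mul_assoc, hkey2, one_mul] at h20
    exact h20
  have hexp1 : 4 * ((c₁:ℝ) + 1) * bb = 4 * ((c₁:ℝ) * bb) + 4 * bb := by ring
  have hexp2 : 4 * ((c₂:ℝ) + 1) * dd = 4 * ((c₂:ℝ) * dd) + 4 * dd := by ring
  have hb2 : 4 * ((c₁:ℝ) * bb) ≤ (Fj.card : ℝ) := by linarith
  have hd2 : 4 * ((c₂:ℝ) * dd) ≤ (Fj.card : ℝ) := by linarith
  linarith
end

section
/- Let G be an amenable group, A a finite set, and F = (F_j)_{j∈J} a Følner net for G. Let X ⊆ A^G be a strongly irreducible subshift containing at least two distinct configurations. Then ent_F(X) > 0. -/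
open Pointwise Filter

variable {G : Type*} [Group G]

section AuxEntropyPos

variable [DecidableEq G]

lemma exists_sep_finset_aux (D : Finset G) (h1 : (1:G) ∈ D)
    (hsymm : ∀ d ∈ D, d⁻¹ ∈ D) (F : Finset G) :
    ∃ T : Finset G, T ⊆ F ∧
      (∀ t ∈ T, ∀ t' ∈ T, t ≠ t' → t⁻¹ * t' ∉ D) ∧ F ⊆ T * D := by
  induction F using Finset.strongInduction with
  | _ F ih =>
    rcases F.eq_empty_or_nonempty with rfl | ⟨f, hf⟩
    · exact ⟨∅, by simp, by simp, by simp⟩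
    · have hfD : f ∈ {f} * D := Finset.mem_mul.2 ⟨f, by simp, 1, h1, mul_one f⟩
      have hss : F \ ({f} * D) ⊂ F := by
        refine Finset.ssubset_iff_of_subset (Finset.sdiff_subset) |>.2 ⟨f, hf, ?_⟩
        simp [hfD]
      obtain ⟨T', hT'F, hsep', hcov'⟩ := ih _ hss
      have key : ∀ s ∈ T', f⁻¹ * s ∉ D := by
        intro s hs hsD
        have : s ∈ {f} * D := Finset.mem_mul.2 ⟨f, by simp, f⁻¹ * s, hsD, by group⟩
        exact (Finset.mem_sdiff.1 (hT'F hs)).2 this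
      refine ⟨insert f T', ?_, ?_, ?_⟩
      · intro t ht
        rcases Finset.mem_insert.1 ht with rfl | ht
        · exact hf
        · exact (Finset.mem_sdiff.1 (hT'F ht)).1
      · intro t ht t' ht' hne
        by_cases htf : t = f <;> by_cases htf' : t' = f
        · exact absurd (htf.trans htf'.symm) hne
        · subst htf
          exact key t' (Finset.mem_insert.1 ht' |>.resolve_left htf')
        · subst htf'
          intro h
          exact key t (Finset.mem_insert.1 ht |>.resolve_left htf)
            (by simpa using hsymm _ h)
        · exact hsep' t (Finset.mem_insert.1 ht |>.resolve_left htf)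
            t' (Finset.mem_insert.1 ht' |>.resolve_left htf') hne
      · intro g hg
        by_cases hgf : g ∈ {f} * D
        · exact Finset.mul_subset_mul_right
            (Finset.singleton_subset_iff.2 (Finset.mem_insert_self f T')) hgf
        · exact Finset.mul_subset_mul_right (Finset.subset_insert _ _)
            (hcov' (Finset.mem_sdiff.2 ⟨hg, hgf⟩))

lemma exists_config_aux {A : Type*} (Δ : Finset G)
    (X : Set (G → A)) (hshift : ∀ g : G, ∀ x ∈ X, shift g x ∈ X)
    (hirr : DeltaIrreducible Δ X)
    (y₀ y₁ : G → A) (hy₀ : y₀ ∈ X) (hy₁ : y₁ ∈ X)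
    (T : Finset G) (hsep : ∀ t ∈ T, ∀ t' ∈ T, t ≠ t' → t⁻¹ * t' ∉ Δ)
    (S : Finset G) :
    ∃ x ∈ X, ∀ t ∈ T, x t = if t ∈ S then y₀ 1 else y₁ 1 := by
  induction T using Finset.induction with
  | empty => exact ⟨y₀, hy₀, by simp⟩
  | @insert t T₀ htT₀ ih =>
    obtain ⟨x, hxX, hxval⟩ := ih (fun a ha b hb hab =>
      hsep a (Finset.mem_insert_of_mem ha) b (Finset.mem_insert_of_mem hb) hab)
    set b : G → A := if t ∈ S then y₀ else y₁ with hb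
    have hbX : b ∈ X := by rw [hb]; split <;> assumption
    have hz : shift t b ∈ X := hshift t b hbX
    have hdisj : plusNbhd (({t} : Finset G) : Set G) (Δ : Set G) ∩ ((T₀ : Finset G) : Set G) = ∅ := by
      ext g
      simp only [Set.mem_inter_iff, Set.mem_empty_iff_false, iff_false, not_and]
      rintro ⟨d, hd, hgd⟩ hgT₀
      simp only [Finset.coe_singleton, Set.mem_singleton_iff] at hgd
      have hgne : g ≠ t := fun h => htT₀ (h ▸ hgT₀)
      exact hsep g (Finset.mem_insert_of_mem hgT₀) t (Finset.mem_insert_self t T₀) hgne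
        (by rw [← hgd]; group; simpa using hd)
    obtain ⟨x', hx'X, h1, h2⟩ := hirr {t} T₀ hdisj _ hz x hxX
    refine ⟨x', hx'X, ?_⟩
    intro s hs
    rcases Finset.mem_insert.1 hs with rfl | hs
    · have h := h1 s (Finset.mem_singleton_self s)
      rw [h]
      by_cases hsS : s ∈ S <;> simp [shift, hb, hsS]
    · rw [h2 s hs]; exact hxval s hs

end AuxEntropyPos

/-- A strongly irreducible subshift with at least two configurations has positive entropy. -/
theorem entropy_pos {A : Type*} [Fintype A]
    [TopologicalSpace A] [DiscreteTopology A]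
    {J : Type*} [Nonempty J] [Preorder J] [IsDirected J (· ≤ ·)]
    (F : J → Finset G) (hF : IsFolnerNet F)
    (X : Set (G → A)) (hX : IsSubshift X) (hSI : StronglyIrreducible X)
    (x₀ x₁ : G → A) (hx₀ : x₀ ∈ X) (hx₁ : x₁ ∈ X) (hne : x₀ ≠ x₁) :
    0 < entropy F X := by
  classical
  obtain ⟨Δ, hirr⟩ := hSI
  obtain ⟨hclosed, hshift⟩ := hX
  obtain ⟨g₀, hg₀⟩ := Function.ne_iff.1 hne
  set y₀ : G → A := shift g₀⁻¹ x₀ with hy₀def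
  set y₁ : G → A := shift g₀⁻¹ x₁ with hy₁def
  have hy₀ : y₀ ∈ X := hshift _ _ hx₀
  have hy₁ : y₁ ∈ X := hshift _ _ hx₁
  have hαβ : y₀ 1 ≠ y₁ 1 := by simpa [hy₀def, hy₁def, shift] using hg₀
  set D : Finset G := (Δ ∪ Δ.image (·⁻¹)) ∪ {1} with hDdef
  have h1D : (1:G) ∈ D := by simp [hDdef]
  have hsymm : ∀ d ∈ D, d⁻¹ ∈ D := by
    intro d hd
    simp only [hDdef, Finset.mem_union, Finset.mem_image, Finset.mem_singleton] at hd ⊢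
    rcases hd with (hd | ⟨a, ha, rfl⟩) | rfl
    · exact Or.inl (Or.inr ⟨d, hd, rfl⟩)
    · simpa using Or.inl (Or.inl ha)
    · simp
  have hΔD : Δ ⊆ D := by
    intro d hd; simp only [hDdef, Finset.mem_union]; exact Or.inl (Or.inl hd)
  have hDpos : 0 < (D.card : ℝ) := by
    exact_mod_cast Finset.card_pos.2 ⟨1, h1D⟩
  set c : ℝ := Real.log 2 / (D.card : ℝ) with hcdef
  have hc : 0 < c := div_pos (Real.log_pos one_lt_two) hDpos
  set u : J → ℝ := fun j =>
    Real.log (((Set.restrict ((F j : Finset G) : Set G)) '' X).ncard : ℝ) / ((F j).card : ℝ)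
    with hudef
  have hΩpos : ∀ j, 0 < ((F j).card : ℝ) := by
    intro j; exact_mod_cast Finset.card_pos.2 (hF.1 j)
  -- key counting bound per index
  have hkey : ∀ j, ∃ T : Finset G,
      ((F j).card ≤ T.card * D.card) ∧
      2 ^ T.card ≤ ((Set.restrict ((F j : Finset G) : Set G)) '' X).ncard := by
    intro j
    obtain ⟨T, hTΩ, hsep, hcov⟩ := exists_sep_finset_aux D h1D hsymm (F j)
    refine ⟨T, le_trans (Finset.card_le_card hcov) Finset.card_mul_le, ?_⟩
    have hsepΔ : ∀ t ∈ T, ∀ t' ∈ T, t ≠ t' → t⁻¹ * t' ∉ Δ :=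
      fun t ht t' ht' h hm => hsep t ht t' ht' h (hΔD hm)
    have hex : ∀ S : Finset G, ∃ x ∈ X, ∀ t ∈ T, x t = if t ∈ S then y₀ 1 else y₁ 1 :=
      exists_config_aux Δ X hshift hirr y₀ y₁ hy₀ hy₁ T hsepΔ
    choose f hfX hfval using hex
    set R : Set (((F j : Finset G) : Set G) → A) :=
      (Set.restrict ((F j : Finset G) : Set G)) '' X with hRdef
    have hRfin : R.Finite := Set.toFinite R
    set φ : Finset G → (((F j : Finset G) : Set G) → A) :=
      fun S => Set.restrict _ (f S) with hφdef
    have hinj : Set.InjOn φ (T.powerset : Set (Finset G)) := by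
      intro S hS S' hS' hφeq
      simp only [Finset.coe_powerset, Set.mem_preimage, Set.mem_powerset_iff,
        Finset.coe_subset] at hS hS'
      ext t
      by_cases htT : t ∈ T
      · have hmem : t ∈ ((F j : Finset G) : Set G) := hTΩ htT
        have := congrFun hφeq ⟨t, hmem⟩
        simp only [hφdef, Set.restrict_apply] at this
        change f S t = f S' t at this
        rw [hfval S t htT, hfval S' t htT] at this
        by_cases h1 : t ∈ S <;> by_cases h2 : t ∈ S' <;>
          simp [h1, h2] at this ⊢ <;> first | exact absurd this hαβ | exact absurd this.symm hαβ
      · constructor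
        · intro h; exact absurd (hS h) htT
        · intro h; exact absurd (hS' h) htT
    have himg : T.powerset.image φ ⊆ hRfin.toFinset := by
      intro v hv
      obtain ⟨S, _, rfl⟩ := Finset.mem_image.1 hv
      rw [Set.Finite.mem_toFinset]
      exact ⟨f S, hfX S, rfl⟩
    calc 2 ^ T.card = T.powerset.card := (Finset.card_powerset T).symm
      _ = (T.powerset.image φ).card := (Finset.card_image_of_injOn hinj).symm
      _ ≤ hRfin.toFinset.card := Finset.card_le_card himg
      _ = R.ncard := (Set.ncard_eq_toFinset_card _ hRfin).symm
  -- lower bound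
  have hlow : ∀ j, c ≤ u j := by
    intro j
    obtain ⟨T, hcard, h2T⟩ := hkey j
    set n : ℕ := ((Set.restrict ((F j : Finset G) : Set G)) '' X).ncard with hndef
    have hnpos : (0:ℝ) < (n:ℝ) := by
      have : 0 < n := lt_of_lt_of_le (Nat.pow_pos (by norm_num)) h2T
      exact_mod_cast this
    have hn2 : (2:ℝ) ^ T.card ≤ (n:ℝ) := by exact_mod_cast h2T
    have hlogn : (T.card : ℝ) * Real.log 2 ≤ Real.log n := by
      have := Real.log_le_log (by positivity) hn2
      rwa [Real.log_pow] at this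
    have hstep : c ≤ ((T.card : ℝ) * Real.log 2) / ((F j).card : ℝ) := by
      rw [hcdef, div_le_div_iff₀ hDpos (hΩpos j)]
      have hcard' : ((F j).card : ℝ) ≤ (T.card : ℝ) * (D.card : ℝ) := by
        exact_mod_cast hcard
      nlinarith [Real.log_pos (show (1:ℝ) < 2 by norm_num), hΩpos j, hDpos]
    calc c ≤ ((T.card : ℝ) * Real.log 2) / ((F j).card : ℝ) := hstep
      _ ≤ Real.log n / ((F j).card : ℝ) :=
        div_le_div_of_nonneg_right hlogn (hΩpos j).le |>.trans_eq rfl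
      _ = u j := rfl
  -- upper bound (boundedness)
  have hup : ∀ j, u j ≤ Real.log (Fintype.card A) := by
    intro j
    set n : ℕ := ((Set.restrict ((F j : Finset G) : Set G)) '' X).ncard with hndef
    obtain ⟨T, hcard, h2T⟩ := hkey j
    have hnpos : 0 < n := lt_of_lt_of_le (Nat.pow_pos (by norm_num)) h2T
    have hbound : n ≤ Fintype.card A ^ (F j).card := by
      have h1 : n ≤ Fintype.card (((F j : Finset G) : Set G) → A) := by
        have := Set.ncard_le_ncard
          (Set.subset_univ ((Set.restrict ((F j : Finset G) : Set G)) '' X)) Set.finite_univ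
        rwa [Set.ncard_univ, Nat.card_eq_fintype_card] at this
      have hcc : Fintype.card (((F j : Finset G) : Set G)) = (F j).card := by
        simp
      rwa [Fintype.card_fun, hcc] at h1
    have hlog : Real.log n ≤ ((F j).card : ℝ) * Real.log (Fintype.card A) := by
      have := Real.log_le_log (by exact_mod_cast hnpos)
        (by exact_mod_cast hbound : (n:ℝ) ≤ ((Fintype.card A : ℝ)) ^ (F j).card)
      rwa [Real.log_pow] at this
    rw [hudef]
    simp only
    rw [div_le_iff₀ (hΩpos j)]
    calc Real.log n ≤ ((F j).card : ℝ) * Real.log (Fintype.card A) := hlog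
      _ = Real.log (Fintype.card A) * ((F j).card : ℝ) := mul_comm _ _
  haveI : (atTop : Filter J).NeBot := atTop_neBot_iff.mpr ⟨inferInstance, inferInstance⟩
  have hb : IsBoundedUnder (· ≤ ·) (atTop : Filter J) u :=
    isBoundedUnder_of ⟨Real.log (Fintype.card A), hup⟩
  have : c ≤ limsup u atTop :=
    le_limsup_of_frequently_le (Frequently.of_forall hlow) hb
  exact lt_of_lt_of_le hc this
end

section
/- Let G be a group, A a finite set, Δ a finite subset of G, and X ⊆ A^G a Δ-irreducible subshift. Suppose (Ω_i)_{i∈I} is a (possibly infinite) family of (possibly infinite) subsets of G such that Ω_i^{+Δ} ∩ (⋃_{k∈I, k≠i} Ω_k) = ∅ for all i ∈ I. Then, given any family (x_i)_{i∈I} of configurations in X, there exists a configuration x ∈ X which coincides with x_i on Ω_i for all i ∈ I. -/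
open Pointwise Filter

variable {G : Type*} [Group G]

/-- Gluing lemma: configurations of a `Δ`-irreducible subshift prescribed on a
`Δ`-separated family of subsets can be glued to a single configuration. -/
theorem glue_of_deltaIrreducible {A : Type*} [Fintype A]
    [TopologicalSpace A] [DiscreteTopology A]
    (Δ : Finset G) (X : Set (G → A)) (hX : IsSubshift X) (hΔ : DeltaIrreducible Δ X)
    {I : Type*} [Nonempty I] (Ω : I → Set G)
    (hsep : ∀ i : I, plusNbhd (Ω i) (Δ : Set G) ∩ (⋃ (k : I) (_ : k ≠ i), Ω k) = ∅)
    (x : I → (G → A)) (hx : ∀ i, x i ∈ X) :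
    ∃ y ∈ X, ∀ i : I, ∀ g ∈ Ω i, y g = x i g := by
  classical
  -- Agreement of prescribed values on overlaps
  have hagree : ∀ i k : I, ∀ g : G, g ∈ Ω i → g ∈ Ω k → x i g = x k g := by
    intro i k g hgi hgk
    by_cases hik : i = k
    · subst hik; rfl
    · have hdisj : plusNbhd (({g} : Finset G) : Set G) (Δ : Set G) ∩
          (({g} : Finset G) : Set G) = ∅ := by
        apply Set.eq_empty_of_subset_empty
        rintro h ⟨⟨d, hd, hgd⟩, hh2⟩
        simp only [Finset.coe_singleton, Set.mem_singleton_iff] at hgd hh2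
        subst hh2
        have : h ∈ plusNbhd (Ω i) (Δ : Set G) ∩ ⋃ (k' : I) (_ : k' ≠ i), Ω k' := by
          refine ⟨⟨d, hd, ?_⟩, Set.mem_iUnion.2 ⟨k, Set.mem_iUnion.2 ⟨fun h' => hik h'.symm, hgk⟩⟩⟩
          rw [hgd]; exact hgi
        rw [hsep i] at this
        exact this
      obtain ⟨z, hz, h1, h2⟩ := hΔ {g} {g} hdisj (x i) (hx i) (x k) (hx k)
      exact (h1 g (Finset.mem_singleton_self g)).symm.trans (h2 g (Finset.mem_singleton_self g))
  -- Finite gluing over a finite set of indices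
  have key : ∀ (F : Finset G) (S : Finset I),
      ∃ y ∈ X, ∀ i ∈ S, ∀ g ∈ F, g ∈ Ω i → y g = x i g := by
    intro F S
    induction S using Finset.induction_on with
    | empty => exact ⟨x (Classical.arbitrary I), hx _, by simp⟩
    | @insert j S' hj ih =>
      obtain ⟨y', hy', hprop⟩ := ih
      set Ω₁ : Finset G := F.filter (fun g => g ∈ Ω j) with hΩ₁
      set Ω₂ : Finset G := F.filter (fun g => ∃ k ∈ S', g ∈ Ω k) with hΩ₂
      have hdisj : plusNbhd (Ω₁ : Set G) (Δ : Set G) ∩ (Ω₂ : Set G) = ∅ := by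
        apply Set.eq_empty_of_subset_empty
        rintro h ⟨⟨d, hd, hgd⟩, hh2⟩
        simp only [hΩ₁, hΩ₂, Finset.coe_filter, Set.mem_setOf_eq] at hgd hh2
        obtain ⟨k, hkS, hk⟩ := hh2.2
        have : h ∈ plusNbhd (Ω j) (Δ : Set G) ∩ ⋃ (k' : I) (_ : k' ≠ j), Ω k' := by
          refine ⟨⟨d, hd, hgd.2⟩, Set.mem_iUnion.2 ⟨k, Set.mem_iUnion.2 ⟨?_, hk⟩⟩⟩
          rintro rfl; exact hj hkS
        rw [hsep j] at this
        exact this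
      obtain ⟨y, hyX, h1, h2⟩ := hΔ Ω₁ Ω₂ hdisj (x j) (hx j) y' hy'
      refine ⟨y, hyX, ?_⟩
      intro i hi g hgF hgΩ
      rcases Finset.mem_insert.mp hi with rfl | hiS
      · exact h1 g (Finset.mem_filter.2 ⟨hgF, hgΩ⟩)
      · rw [h2 g (Finset.mem_filter.2 ⟨hgF, ⟨i, hiS, hgΩ⟩⟩)]
        exact hprop i hiS g hgF hgΩ
  -- The closed pieces
  set C : Finset G → Set (G → A) := fun F =>
    X ∩ ⋂ (i : I), ⋂ g ∈ F, ⋂ (_ : g ∈ Ω i), {y : G → A | y g = x i g} with hC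
  have hmemC : ∀ (F : Finset G) (y : G → A),
      y ∈ C F ↔ y ∈ X ∧ ∀ (i : I), ∀ g ∈ F, g ∈ Ω i → y g = x i g := by
    intro F y
    simp [hC, Set.mem_iInter]
  have hCne : ∀ F, (C F).Nonempty := by
    intro F
    let ind : G → I := fun g => if h : ∃ i, g ∈ Ω i then h.choose else Classical.arbitrary I
    obtain ⟨y, hyX, hy⟩ := key F (F.image ind)
    refine ⟨y, (hmemC F y).2 ⟨hyX, ?_⟩⟩
    intro i g hgF hgΩ
    have hex : ∃ i', g ∈ Ω i' := ⟨i, hgΩ⟩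
    have hind : ind g = hex.choose := dif_pos hex
    have hmem : g ∈ Ω (ind g) := by rw [hind]; exact hex.choose_spec
    have : y g = x (ind g) g :=
      hy (ind g) (Finset.mem_image.2 ⟨g, hgF, rfl⟩) g hgF hmem
    rw [this]
    exact hagree (ind g) i g hmem hgΩ
  have hCclosed : ∀ F, IsClosed (C F) := by
    intro F
    refine hX.1.inter ?_
    refine isClosed_iInter fun i => isClosed_iInter fun g => isClosed_iInter fun _ =>
      isClosed_iInter fun _ => ?_
    exact isClosed_eq (continuous_apply g) continuous_const
  have hCcompact : ∀ F, IsCompact (C F) := fun F => (hCclosed F).isCompact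
  have hdir : Directed (· ⊇ ·) C := by
    intro F₁ F₂
    refine ⟨F₁ ∪ F₂, ?_, ?_⟩ <;>
    · intro y hy
      rw [hmemC] at hy ⊢
      exact ⟨hy.1, fun i g hg hgΩ => hy.2 i g (by simp [Finset.mem_union, hg]) hgΩ⟩
  obtain ⟨y, hy⟩ :=
    IsCompact.nonempty_iInter_of_directed_nonempty_isCompact_isClosed C hdir hCne hCcompact hCclosed
  have hyF : ∀ F, y ∈ C F := fun F => Set.mem_iInter.1 hy F
  refine ⟨y, ((hmemC ∅ y).1 (hyF ∅)).1, ?_⟩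
  intro i g hg
  exact ((hmemC {g} y).1 (hyF {g})).2 i g (Finset.mem_singleton_self g) hg
end
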